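/- arXiv:math/9910165 — 2 statements merged into one kernel-verified Lean document; each statement's English description precedes it below -/
import Mathlib

section
/- Let λ be a partition of a positive integer n ≥ 4 and let f : ℕ → ℝ. Set P₂ = Pr[i ∈ D(T)] (which is independent of i for 1 ≤ i ≤ n−1), P₃ = Pr[i ∈ D(T) and i+1 ∈ D(T)] (independent of i for 1 ≤ i ≤ n−2), and P₂₂ = Pr[i ∈ D(T) and j ∈ D(T)] (independent of the pair (i,j) with 1 ≤ i < j ≤ n−1, j − i > 1); also set Σ₁ = Σ_{i=1}^{n−1} f(i), Σ₂ = Σ_{i=1}^{n−1} f(i)², and Σ₃ = 2·Σ_{i=1}^{n−2} f(i)f(i+1). Then Var_λ[d_f] = (P₂ − P₂₂)·Σ₂ + (P₃ − P₂₂)·Σ₃ + (P₂₂ − P₂²)·Σ₁². -/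
open scoped BigOperators

/-- A standard Young tableau of shape `Y` (a Young diagram with `Y.card = n`):
a bijective filling of the cells of `Y` by the numbers `1, …, n`, strictly increasing
along each row (left to right) and down each column.  Entries outside the
diagram are `0`. -/
structure SYT (Y : YoungDiagram) where
  entry : ℕ → ℕ → ℕ
  bijOn : Set.BijOn (fun c : ℕ × ℕ => entry c.1 c.2) ↑Y.cells (Set.Icc 1 Y.card)
  row_strict : ∀ ⦃i j1 j2 : ℕ⦄, j1 < j2 → (i, j2) ∈ Y → entry i j1 < entry i j2
  col_strict : ∀ ⦃i1 i2 j : ℕ⦄, i1 < i2 → (i2, j) ∈ Y → entry i1 j < entry i2 j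
  zeros : ∀ ⦃i j : ℕ⦄, (i, j) ∉ Y → entry i j = 0

namespace SYT

variable {Y : YoungDiagram}

/-- `i` is a descent of `T` : the entry `i + 1` lies in a strictly lower row
than the entry `i`. -/
def IsDescent (T : SYT Y) (i : ℕ) : Prop :=
  ∃ c ∈ Y.cells, ∃ c' ∈ Y.cells,
    T.entry c.1 c.2 = i ∧ T.entry c'.1 c'.2 = i + 1 ∧ c.1 < c'.1

open Classical in
/-- The descent set `D(T)` of a standard Young tableau, as a finset.
(Descents necessarily lie in `{1, …, n - 1}` ⊆ `range n`.) -/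
noncomputable def descents (T : SYT Y) : Finset ℕ :=
  (Finset.range Y.card).filter fun i => T.IsDescent i

/-- The major index `maj(T) = ∑_{i ∈ D(T)} i`. -/
noncomputable def maj (T : SYT Y) : ℕ :=
  ∑ i ∈ T.descents, i

/-- The descent function `d_f(T) = ∑_{i ∈ D(T)} f(i)`. -/
noncomputable def dfun (f : ℕ → ℝ) (T : SYT Y) : ℝ :=
  ∑ i ∈ T.descents, f i

end SYT

/-- Expectation of a statistic `g` over uniformly random standard Young tableaux
of shape `Y` : `E_λ[g] = (1/f^λ) ∑_T g(T)`. -/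
noncomputable def sytExpect (Y : YoungDiagram) (g : SYT Y → ℝ) : ℝ :=
  (∑ᶠ T : SYT Y, g T) / (Nat.card (SYT Y) : ℝ)

/-- Variance of a statistic `g` : `Var_λ[g] = E_λ[g²] − (E_λ[g])²`. -/
noncomputable def sytVar (Y : YoungDiagram) (g : SYT Y → ℝ) : ℝ :=
  sytExpect Y (fun T => (g T) ^ 2) - (sytExpect Y g) ^ 2

/-- Probability of an event `P` for a uniformly random standard Young tableau of shape `Y`. -/
noncomputable def sytProb (Y : YoungDiagram) (P : SYT Y → Prop) : ℝ :=
  (Nat.card {T : SYT Y // P T} : ℝ) / (Nat.card (SYT Y) : ℝ)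

/-- The constant `c(λ) = [C(n,2) − Σ_i C(λ_i,2) + Σ_j C(λ'_j,2)] / (n(n−1))`.
Rows and columns are 0-indexed; since `Y` has at most `Y.card` nonempty rows and
columns, the sums over `range Y.card` capture all nonzero terms. -/
noncomputable def cpar (Y : YoungDiagram) : ℝ :=
  ((Y.card.choose 2 : ℝ) - ∑ i ∈ Finset.range Y.card, ((Y.rowLen i).choose 2 : ℝ)
      + ∑ j ∈ Finset.range Y.card, ((Y.colLen j).choose 2 : ℝ))
    / ((Y.card : ℝ) * ((Y.card : ℝ) - 1))

/-- The hook length of the cell `c = (i, j)` (0-indexed):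
`h_{ij} = λ_{i+1} + λ'_{j+1} − (i+1) − (j+1) + 1 = rowLen i + colLen j − i − j − 1`. -/
def hookLen (Y : YoungDiagram) (c : ℕ × ℕ) : ℕ :=
  Y.rowLen c.1 + Y.colLen c.2 - c.1 - c.2 - 1


namespace SYT
variable {Y : YoungDiagram}

theorem ext' {T₁ T₂ : SYT Y} (h : T₁.entry = T₂.entry) : T₁ = T₂ := by
  cases T₁; cases T₂; cases h; rfl

instance : Finite (SYT Y) := by
  apply Finite.of_injective
    (fun (T : SYT Y) (c : ↑(Y.cells : Set (ℕ × ℕ))) =>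
      (⟨T.entry c.1.1 c.1.2, T.bijOn.mapsTo c.2⟩ : Set.Icc 1 Y.card))
  intro T₁ T₂ h
  apply ext'
  funext i j
  by_cases hc : (i, j) ∈ Y
  · exact congrArg Subtype.val (congrFun h ⟨(i, j), Finset.mem_coe.mpr ((Y.mem_cells _).mpr hc)⟩)
  · rw [T₁.zeros hc, T₂.zeros hc]

theorem isDescent_bounds (T : SYT Y) {i : ℕ} (h : T.IsDescent i) :
    1 ≤ i ∧ i + 1 ≤ Y.card := by
  obtain ⟨c, hc, c', hc', h1, h2, -⟩ := h
  have hb := T.bijOn.mapsTo (Finset.mem_coe.mpr hc)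
  have hb' := T.bijOn.mapsTo (Finset.mem_coe.mpr hc')
  simp only [Set.mem_Icc] at hb hb'
  rw [h1] at hb; rw [h2] at hb'
  omega

open Classical in
theorem descents_eq (T : SYT Y) :
    T.descents = (Finset.Icc 1 (Y.card - 1)).filter (fun i => T.IsDescent i) := by
  ext i
  simp only [SYT.descents, Finset.mem_filter, Finset.mem_range, Finset.mem_Icc]
  constructor
  · rintro ⟨-, h⟩
    have := T.isDescent_bounds h
    exact ⟨⟨by omega, by omega⟩, h⟩
  · rintro ⟨-, h⟩
    have := T.isDescent_bounds h
    exact ⟨by omega, h⟩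

end SYT

theorem sytProb_congr {Y : YoungDiagram} {P Q : SYT Y → Prop} (h : ∀ T, P T ↔ Q T) :
    sytProb Y P = sytProb Y Q := by
  have : P = Q := funext fun T => propext (h T)
  rw [this]

open Classical in
theorem sytProb_eq_sum {Y : YoungDiagram} [Fintype (SYT Y)] (P : SYT Y → Prop) :
    sytProb Y P = (∑ T : SYT Y, if P T then (1:ℝ) else 0) / (Nat.card (SYT Y) : ℝ) := by
  rw [sytProb, Nat.card_eq_fintype_card, Fintype.card_subtype, Finset.sum_boole]


/-- Let `λ` be a partition of `n ≥ 4` and `f : ℕ → ℝ`.  With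
`P₂ = Pr[i ∈ D(T)]`, `P₃ = Pr[i, i+1 ∈ D(T)]` and `P₂₂ = Pr[i, j ∈ D(T)]` (`j − i > 1`),
all independent of the indices in the stated ranges, and
`Σ₁ = Σ_{i=1}^{n−1} f(i)`, `Σ₂ = Σ_{i=1}^{n−1} f(i)²`, `Σ₃ = 2Σ_{i=1}^{n−2} f(i)f(i+1)`,
one has `Var_λ[d_f] = (P₂ − P₂₂)Σ₂ + (P₃ − P₂₂)Σ₃ + (P₂₂ − P₂²)Σ₁²`. -/
theorem variance_descent_function (n : ℕ) (hn : 4 ≤ n) (Y : YoungDiagram) (hY : Y.card = n)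
    (f : ℕ → ℝ) (P₂ P₃ P₂₂ : ℝ)
    (hP2 : ∀ i : ℕ, 1 ≤ i → i ≤ n - 1 → sytProb Y (fun T => T.IsDescent i) = P₂)
    (hP3 : ∀ i : ℕ, 1 ≤ i → i ≤ n - 2 →
      sytProb Y (fun T => T.IsDescent i ∧ T.IsDescent (i + 1)) = P₃)
    (hP22 : ∀ i j : ℕ, 1 ≤ i → i < j → j ≤ n - 1 → 1 < j - i →
      sytProb Y (fun T => T.IsDescent i ∧ T.IsDescent j) = P₂₂) :
    sytVar Y (SYT.dfun f) =
      (P₂ - P₂₂) * (∑ i ∈ Finset.Icc 1 (n - 1), f i ^ 2)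
        + (P₃ - P₂₂) * (2 * ∑ i ∈ Finset.Icc 1 (n - 2), f i * f (i + 1))
        + (P₂₂ - P₂ ^ 2) * (∑ i ∈ Finset.Icc 1 (n - 1), f i) ^ 2 := by
  classical
  haveI : Fintype (SYT Y) := Fintype.ofFinite _
  by_cases hE : IsEmpty (SYT Y)
  · have hcard : ((Nat.card (SYT Y) : ℝ)) = 0 := by simp [Nat.card_of_isEmpty]
    have h2 : P₂ = 0 := by rw [← hP2 1 le_rfl (by omega), sytProb, hcard, div_zero]
    have h3 : P₃ = 0 := by rw [← hP3 1 le_rfl (by omega), sytProb, hcard, div_zero]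
    have h22 : P₂₂ = 0 := by
      rw [← hP22 1 3 le_rfl (by omega) (by omega) (by omega), sytProb, hcard, div_zero]
    simp [sytVar, sytExpect, hcard, h2, h3, h22]
  · haveI : Nonempty (SYT Y) := not_isEmpty_iff.mp hE
    have hN : ((Nat.card (SYT Y) : ℝ)) ≠ 0 := by
      exact_mod_cast Nat.card_pos.ne'
    set N : ℝ := (Nat.card (SYT Y) : ℝ) with hNdef
    set I : Finset ℕ := Finset.Icc 1 (n - 1) with hI
    set χ : ℕ → SYT Y → ℝ := fun i T => if T.IsDescent i then 1 else 0 with hχ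
    -- expand dfun
    have hd : ∀ T : SYT Y, SYT.dfun f T = ∑ i ∈ I, f i * χ i T := by
      intro T
      rw [SYT.dfun, T.descents_eq, hY, Finset.sum_filter]
      exact Finset.sum_congr rfl fun i _ => by
        by_cases h : T.IsDescent i <;> simp [hχ, h]
    -- sums of indicators
    have hEchi : ∀ i ∈ I, (∑ T : SYT Y, χ i T) = P₂ * N := by
      intro i hi
      rw [Finset.mem_Icc] at hi
      have h := hP2 i hi.1 hi.2
      rw [sytProb_eq_sum] at h
      rw [div_eq_iff hN] at h
      exact h
    -- q value for pairs
    have hq : ∀ i ∈ I, ∀ j ∈ I, (∑ T : SYT Y, χ i T * χ j T)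
        = (P₂₂ + (if i = j then P₂ - P₂₂ else 0) + (if j = i + 1 then P₃ - P₂₂ else 0)
            + (if i = j + 1 then P₃ - P₂₂ else 0)) * N := by
      intro i hi j hj
      rw [Finset.mem_Icc] at hi hj
      have hkey : sytProb Y (fun T => T.IsDescent i ∧ T.IsDescent j)
          = P₂₂ + (if i = j then P₂ - P₂₂ else 0) + (if j = i + 1 then P₃ - P₂₂ else 0)
            + (if i = j + 1 then P₃ - P₂₂ else 0) := by
        rcases eq_or_ne i j with rfl | hij
        · rw [sytProb_congr (fun T => and_self_iff), hP2 i hi.1 hi.2]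
          split_ifs with h1 h2 h3 <;> first | omega | ring
        · rcases eq_or_ne j (i + 1) with rfl | hji1
          · rw [hP3 i hi.1 (by omega)]
            split_ifs with h1 h2 h3 <;> first | omega | ring
          · rcases eq_or_ne i (j + 1) with rfl | hij1
            · rw [sytProb_congr (fun T => and_comm), hP3 j hj.1 (by omega)]
              split_ifs with h1 h2 h3 <;> first | omega | ring
            · rcases lt_or_gt_of_ne hij with hlt | hgt
              · rw [hP22 i j hi.1 hlt hj.2 (by omega)]
                split_ifs with h1 h2 h3 <;> first | omega | ring
              · rw [sytProb_congr (fun T => and_comm), hP22 j i hj.1 hgt hi.2 (by omega)]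
                split_ifs with h1 h2 h3 <;> first | omega | ring
      rw [sytProb_eq_sum, div_eq_iff hN] at hkey
      rw [← hkey]
      exact Finset.sum_congr rfl fun T _ => by
        by_cases h1 : T.IsDescent i <;> by_cases h2 : T.IsDescent j <;> simp [hχ, h1, h2]
    -- first moment
    have hE1 : sytExpect Y (SYT.dfun f) = P₂ * ∑ i ∈ I, f i := by
      rw [sytExpect, finsum_eq_sum_of_fintype]
      rw [Finset.sum_congr rfl fun T _ => hd T, Finset.sum_comm]
      rw [Finset.sum_congr rfl (fun i hi => by
        rw [← Finset.mul_sum, hEchi i hi, ← mul_assoc]), ← Finset.sum_mul,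
        mul_div_cancel_right₀ _ hN, ← Finset.sum_mul, mul_comm]
    -- second moment
    have hE2 : sytExpect Y (fun T => SYT.dfun f T ^ 2)
        = ∑ i ∈ I, ∑ j ∈ I, f i * f j *
            (P₂₂ + (if i = j then P₂ - P₂₂ else 0) + (if j = i + 1 then P₃ - P₂₂ else 0)
              + (if i = j + 1 then P₃ - P₂₂ else 0)) := by
      rw [sytExpect, finsum_eq_sum_of_fintype]
      have expand : ∀ T : SYT Y, SYT.dfun f T ^ 2
          = ∑ i ∈ I, ∑ j ∈ I, f i * f j * (χ i T * χ j T) := by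
        intro T
        rw [hd T, sq, Finset.sum_mul_sum]
        exact Finset.sum_congr rfl fun i _ => Finset.sum_congr rfl fun j _ => by ring
      have step1 : ∀ i ∈ I, (∑ T : SYT Y, ∑ j ∈ I, f i * f j * (χ i T * χ j T))
          = ∑ j ∈ I, ∑ T : SYT Y, f i * f j * (χ i T * χ j T) :=
        fun i _ => Finset.sum_comm
      have step2 : ∀ i ∈ I, ∀ j ∈ I, (∑ T : SYT Y, f i * f j * (χ i T * χ j T))
          = f i * f j * (P₂₂ + (if i = j then P₂ - P₂₂ else 0)
              + (if j = i + 1 then P₃ - P₂₂ else 0)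
              + (if i = j + 1 then P₃ - P₂₂ else 0)) * N := by
        intro i hi j hj
        rw [← Finset.mul_sum, hq i hi j hj, ← mul_assoc]
      rw [Finset.sum_congr rfl fun T _ => expand T, Finset.sum_comm,
        Finset.sum_congr rfl step1,
        Finset.sum_congr rfl (fun i hi => Finset.sum_congr rfl (step2 i hi)),
        Finset.sum_congr rfl (fun i _ => (Finset.sum_mul I _ N).symm), ← Finset.sum_mul,
        mul_div_cancel_right₀ _ hN]
    -- put together
    rw [sytVar, hE2, hE1]
    have hsplit : ∀ i ∈ I, ∀ j ∈ I,
        f i * f j * (P₂₂ + (if i = j then P₂ - P₂₂ else 0) + (if j = i + 1 then P₃ - P₂₂ else 0)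
          + (if i = j + 1 then P₃ - P₂₂ else 0))
        = f i * f j * P₂₂ + (if i = j then f i * f j * (P₂ - P₂₂) else 0)
          + (if j = i + 1 then f i * f j * (P₃ - P₂₂) else 0)
          + (if i = j + 1 then f i * f j * (P₃ - P₂₂) else 0) := by
      intro i _ j _
      split_ifs <;> ring
    rw [Finset.sum_congr rfl (fun i hi => Finset.sum_congr rfl (fun j hj => hsplit i hi j hj))]
    simp only [Finset.sum_add_distrib]
    have hIf : I.filter (fun i => i + 1 ∈ I) = Finset.Icc 1 (n - 2) := by
      ext a
      simp only [hI, Finset.mem_filter, Finset.mem_Icc]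
      omega
    have hA : ∑ i ∈ I, ∑ j ∈ I, f i * f j * P₂₂ = (∑ i ∈ I, f i) ^ 2 * P₂₂ := by
      rw [sq, Finset.sum_mul_sum, Finset.sum_mul]
      exact Finset.sum_congr rfl fun i _ => (Finset.sum_mul _ _ _).symm
    have hB : ∑ i ∈ I, ∑ j ∈ I, (if i = j then f i * f j * (P₂ - P₂₂) else 0)
        = (∑ i ∈ I, f i ^ 2) * (P₂ - P₂₂) := by
      rw [Finset.sum_mul]
      refine Finset.sum_congr rfl fun i hi => ?_
      rw [Finset.sum_ite_eq I i (fun j => f i * f j * (P₂ - P₂₂)), if_pos hi, sq]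
    have hC : ∑ i ∈ I, ∑ j ∈ I, (if j = i + 1 then f i * f j * (P₃ - P₂₂) else 0)
        = (∑ i ∈ Finset.Icc 1 (n - 2), f i * f (i + 1)) * (P₃ - P₂₂) := by
      rw [Finset.sum_congr rfl (fun i _ =>
        Finset.sum_ite_eq' I (i + 1) (fun j => f i * f j * (P₃ - P₂₂))),
        ← Finset.sum_filter, hIf, Finset.sum_mul]
    have hD : ∑ i ∈ I, ∑ j ∈ I, (if i = j + 1 then f i * f j * (P₃ - P₂₂) else 0)
        = (∑ i ∈ Finset.Icc 1 (n - 2), f i * f (i + 1)) * (P₃ - P₂₂) := by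
      rw [Finset.sum_comm]
      rw [Finset.sum_congr rfl (fun j _ =>
        Finset.sum_ite_eq' I (j + 1) (fun i => f i * f j * (P₃ - P₂₂))),
        ← Finset.sum_filter, hIf, Finset.sum_mul]
      exact Finset.sum_congr rfl fun i _ => by ring
    rw [hA, hB, hC, hD]
    ring
end

section
/- Let n and m be positive integers with n/2 ≤ m < n, and let λ be a partition of n with λ_1 ≤ m. Then the expected major index of a uniformly random standard Young tableau of shape λ satisfies E_λ[maj] ≥ (1/2)·[C(n,2) − C(m,2) − C(n−m,2)], where C(a,2) = a(a−1)/2. -/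
open scoped BigOperators

namespace SYT


variable {Y : YoungDiagram}

theorem ext'_s17 {T T' : SYT Y} (h : T.entry = T'.entry) : T = T' := by
  cases T; cases T'; simpa using h

theorem entry_mem (T : SYT Y) {c : ℕ × ℕ} (hc : c ∈ Y) :
    T.entry c.1 c.2 ∈ Set.Icc 1 Y.card :=
  T.bijOn.mapsTo (by simpa using hc)

theorem entry_pos_of_mem (T : SYT Y) {c : ℕ × ℕ} (hc : c ∈ Y) : 1 ≤ T.entry c.1 c.2 :=
  (T.entry_mem hc).1

theorem entry_inj (T : SYT Y) {c c' : ℕ × ℕ} (hc : c ∈ Y) (hc' : c' ∈ Y)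
    (h : T.entry c.1 c.2 = T.entry c'.1 c'.2) : c = c' :=
  T.bijOn.injOn (by simpa using hc) (by simpa using hc') h

/-- position of a value -/
noncomputable def pos (T : SYT Y) (v : ℕ) : ℕ × ℕ :=
  if h : ∃ c : ℕ × ℕ, c ∈ Y ∧ T.entry c.1 c.2 = v then h.choose else 0

theorem pos_spec (T : SYT Y) {v : ℕ} (hv : v ∈ Set.Icc 1 Y.card) :
    T.pos v ∈ Y ∧ T.entry (T.pos v).1 (T.pos v).2 = v := by
  obtain ⟨c, hc, hcv⟩ := T.bijOn.surjOn hv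
  have h : ∃ c : ℕ × ℕ, c ∈ Y ∧ T.entry c.1 c.2 = v := ⟨c, by simpa using hc, hcv⟩
  rw [pos, dif_pos h]
  exact h.choose_spec

theorem pos_mem (T : SYT Y) {v : ℕ} (hv : v ∈ Set.Icc 1 Y.card) : T.pos v ∈ Y :=
  (T.pos_spec hv).1

theorem entry_pos (T : SYT Y) {v : ℕ} (hv : v ∈ Set.Icc 1 Y.card) :
    T.entry (T.pos v).1 (T.pos v).2 = v :=
  (T.pos_spec hv).2

theorem eq_pos (T : SYT Y) {c : ℕ × ℕ} (hc : c ∈ Y) {v : ℕ}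
    (h : T.entry c.1 c.2 = v) : c = T.pos v := by
  have hv : v ∈ Set.Icc 1 Y.card := h ▸ T.entry_mem hc
  exact T.entry_inj hc (T.pos_mem hv) (by rw [h, T.entry_pos hv])

theorem pos_inj (T : SYT Y) {v w : ℕ} (hv : v ∈ Set.Icc 1 Y.card)
    (hw : w ∈ Set.Icc 1 Y.card) (h : T.pos v = T.pos w) : v = w := by
  rw [← T.entry_pos hv, ← T.entry_pos hw, h]


instance inst_s17 : Finite (SYT Y) := by
  classical
  have : Function.Injective
      (fun (T : SYT Y) (c : {x // x ∈ Y.cells}) =>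
        (⟨T.entry c.1.1 c.1.2, T.entry_mem (by simpa using c.2)⟩ :
          Set.Icc 1 Y.card)) := by
    intro T T' h
    apply ext'_s17
    funext i j
    by_cases hij : (i, j) ∈ Y
    · have := congrFun h ⟨(i, j), by simpa using hij⟩
      simpa using this
    · rw [T.zeros hij, T'.zeros hij]
  exact Finite.of_injective _ this

/-- the row-reading standard tableau -/
theorem nonempty : Nonempty (SYT Y) := by
  classical
  set P : ℕ → ℕ := fun i => ∑ r ∈ Finset.range i, Y.rowLen r with hP
  have hPmono : ∀ {a b : ℕ}, a ≤ b → P a ≤ P b := fun h =>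
    Finset.sum_le_sum_of_subset (Finset.range_subset_range.2 h)
  have hPsucc : ∀ i, P (i + 1) = P i + Y.rowLen i := fun i =>
    Finset.sum_range_succ _ i
  have hrowbound : ∀ {i j : ℕ}, (i, j) ∈ Y → i < Y.colLen 0 := by
    intro i j hij
    rw [← YoungDiagram.mem_iff_lt_colLen]
    exact Y.up_left_mem le_rfl (Nat.zero_le _) hij
  have hcard : ∀ {K : ℕ}, Y.colLen 0 ≤ K → P K = Y.card := by
    intro K hK
    have : Y.cells = (Finset.range K).biUnion (fun i => Y.row i) := by
      ext c
      simp only [Finset.mem_biUnion, Finset.mem_range, YoungDiagram.mem_row_iff,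
        YoungDiagram.mem_cells]
      constructor
      · intro hc
        exact ⟨c.1, lt_of_lt_of_le (hrowbound (by rwa [← Prod.mk.eta (p := c)] at hc)) hK,
          hc, rfl⟩
      · rintro ⟨i, _, hc, _⟩; exact hc
    show ∑ r ∈ Finset.range K, Y.rowLen r = Y.card
    have hdisj : ∀ x ∈ Finset.range K, ∀ y ∈ Finset.range K, x ≠ y →
        Disjoint (Y.row x) (Y.row y) := by
      intro x _ y _ hxy
      simp only [Finset.disjoint_left]
      intro c hcx hcy
      rw [YoungDiagram.mem_row_iff] at hcx hcy
      exact hxy (hcx.2 ▸ hcy.2)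
    calc ∑ r ∈ Finset.range K, Y.rowLen r
        = ∑ r ∈ Finset.range K, (Y.row r).card := by
          simp_rw [YoungDiagram.rowLen_eq_card]
      _ = Y.cells.card := by rw [this, Finset.card_biUnion hdisj]
  set e : ℕ → ℕ → ℕ := fun i j => if (i, j) ∈ Y then P i + j + 1 else 0 with he
  have hmem_lt : ∀ {i j : ℕ}, (i, j) ∈ Y → j < Y.rowLen i := fun h =>
    YoungDiagram.mem_iff_lt_rowLen.1 h
  have hemem : ∀ {i j : ℕ}, (i, j) ∈ Y → e i j = P i + j + 1 := by
    intro i j h; simp [he, h]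
  have hub : ∀ {i j : ℕ}, (i, j) ∈ Y → P i + j + 1 ≤ Y.card := by
    intro i j h
    have h1 : P i + j + 1 ≤ P (i + 1) := by
      rw [hPsucc]; have := hmem_lt h; omega
    have h2 : P (i + 1) ≤ P (max (i+1) (Y.colLen 0)) := hPmono (le_max_left _ _)
    rw [hcard (le_max_right _ _)] at h2
    omega
  refine ⟨⟨e, ⟨?_, ?_, ?_⟩, ?_, ?_, ?_⟩⟩
  · intro c hc
    rw [Finset.mem_coe, YoungDiagram.mem_cells] at hc
    have hc' : (c.1, c.2) ∈ Y := by rwa [Prod.mk.eta]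
    simp only [Set.mem_Icc, hemem hc']
    exact ⟨by omega, hub hc'⟩
  · intro c hc c' hc' hcc
    rw [Finset.mem_coe, YoungDiagram.mem_cells] at hc hc'
    have hc1 : (c.1, c.2) ∈ Y := by rwa [Prod.mk.eta]
    have hc2 : (c'.1, c'.2) ∈ Y := by rwa [Prod.mk.eta]
    simp only [hemem hc1, hemem hc2] at hcc
    have key : ∀ {a b : ℕ × ℕ}, (a.1, a.2) ∈ Y → (b.1, b.2) ∈ Y → a.1 < b.1 →
        P a.1 + a.2 + 1 < P b.1 + b.2 + 1 := by
      intro a b ha hb hab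
      have : P a.1 + Y.rowLen a.1 ≤ P b.1 := by
        rw [← hPsucc]; exact hPmono hab
      have := hmem_lt ha
      omega
    rcases lt_trichotomy c.1 c'.1 with h | h | h
    · exact absurd hcc (Nat.ne_of_lt (key hc1 hc2 h))
    · have : c.2 = c'.2 := by rw [h] at hcc; omega
      exact Prod.ext h this
    · exact absurd hcc.symm (Nat.ne_of_lt (key hc2 hc1 h))
  · intro v hv
    rw [Set.mem_Icc] at hv
    have hvP : v ≤ P (Y.colLen 0) := by rw [hcard le_rfl]; exact hv.2
    clear_value P
    obtain ⟨i, j, hij, hv⟩ :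
        ∃ i j, (i, j) ∈ Y ∧ P i + j + 1 = v := by
      have : ∀ K v, 1 ≤ v → v ≤ P K → ∃ i j, (i, j) ∈ Y ∧ P i + j + 1 = v := by
        intro K
        induction K with
        | zero => intro v h1 h2; simp [hP] at h2; omega
        | succ k ih =>
          intro v h1 h2
          by_cases hk : v ≤ P k
          · exact ih v h1 hk
          · push_neg at hk
            refine ⟨k, v - P k - 1, ?_, by omega⟩
            rw [YoungDiagram.mem_iff_lt_rowLen]
            have := hPsucc k
            omega
      exact this _ v hv.1 hvP
    exact ⟨(i, j), by simpa using hij, by simpa using (hemem hij) ▸ hv⟩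
  · intro i j1 j2 hj hj2
    have hj1 : (i, j1) ∈ Y := Y.up_left_mem le_rfl (le_of_lt hj) hj2
    rw [hemem hj1, hemem hj2]; omega
  · intro i1 i2 j hi hi2
    have hi1 : (i1, j) ∈ Y := Y.up_left_mem (le_of_lt hi) le_rfl hi2
    rw [hemem hi1, hemem hi2]
    have : P i1 + Y.rowLen i1 ≤ P i2 := by rw [← hPsucc]; exact hPmono hi
    have := hmem_lt hi1
    omega
  · intro i j h; simp [he, h]

variable {Y : YoungDiagram}

/-- value `v+1` sits directly right of `v`. -/
def IsH (T : SYT Y) (v : ℕ) : Prop :=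
  T.pos (v + 1) = ((T.pos v).1, (T.pos v).2 + 1)

/-- value `v+1` sits directly below `v`. -/
def IsV (T : SYT Y) (v : ℕ) : Prop :=
  T.pos (v + 1) = ((T.pos v).1 + 1, (T.pos v).2)

section Geometry

variable (T : SYT Y)

theorem mem_Icc_of (a : ℕ) (h1 : 1 ≤ a) (h2 : a ≤ Y.card) : a ∈ Set.Icc 1 Y.card :=
  Set.mem_Icc.2 ⟨h1, h2⟩

theorem pos_ne_pos {a b : ℕ} (ha : a ∈ Set.Icc 1 Y.card) (hb : b ∈ Set.Icc 1 Y.card)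
    (hab : a ≠ b) : T.pos a ≠ T.pos b := fun h => hab (T.pos_inj ha hb h)

theorem same_row_adj {a : ℕ} (h1 : 1 ≤ a) (h2 : a + 1 ≤ Y.card)
    (hrow : (T.pos a).1 = (T.pos (a + 1)).1) : IsH T a := by
  have ha : a ∈ Set.Icc 1 Y.card := ⟨h1, by omega⟩
  have ha1 : a + 1 ∈ Set.Icc 1 Y.card := ⟨by omega, h2⟩
  obtain ⟨hm, he⟩ := T.pos_spec ha
  obtain ⟨hm1, he1⟩ := T.pos_spec ha1
  have hpq : T.pos a ≠ T.pos (a + 1) := T.pos_ne_pos ha ha1 (by omega)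
  rcases hp : T.pos a with ⟨r, c⟩
  rcases hq : T.pos (a + 1) with ⟨r', c'⟩
  rw [IsH, hp, hq]
  rw [hp] at he hm hrow
  rw [hq] at he1 hm1 hrow hpq
  rw [hp] at hpq
  simp only at he he1 hrow
  subst hrow
  have hcol : c < c' := by
    rcases lt_trichotomy c c' with h | h | h
    · exact h
    · exact absurd (by rw [h]) hpq
    · have := T.row_strict h hm
      omega
  rcases Nat.lt_or_ge (c + 1) c' with h | h
  · exfalso
    have hmem : (r, c + 1) ∈ Y := Y.up_left_mem le_rfl (by omega) hm1
    have hgt := T.row_strict (by omega : c < c + 1) hmem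
    have hlt := T.row_strict h hm1
    omega
  · have : c' = c + 1 := by omega
    rw [this]

theorem same_col_adj {a : ℕ} (h1 : 1 ≤ a) (h2 : a + 1 ≤ Y.card)
    (hcol : (T.pos a).2 = (T.pos (a + 1)).2) : IsV T a := by
  have ha : a ∈ Set.Icc 1 Y.card := ⟨h1, by omega⟩
  have ha1 : a + 1 ∈ Set.Icc 1 Y.card := ⟨by omega, h2⟩
  obtain ⟨hm, he⟩ := T.pos_spec ha
  obtain ⟨hm1, he1⟩ := T.pos_spec ha1
  have hpq : T.pos a ≠ T.pos (a + 1) := T.pos_ne_pos ha ha1 (by omega)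
  rcases hp : T.pos a with ⟨r, c⟩
  rcases hq : T.pos (a + 1) with ⟨r', c'⟩
  rw [IsV, hp, hq]
  rw [hp] at he hm hcol
  rw [hq] at he1 hm1 hcol hpq
  rw [hp] at hpq
  simp only at he he1 hcol
  subst hcol
  have hrow : r < r' := by
    rcases lt_trichotomy r r' with h | h | h
    · exact h
    · exact absurd (by rw [h]) hpq
    · have := T.col_strict h hm
      omega
  rcases Nat.lt_or_ge (r + 1) r' with h | h
  · exfalso
    have hmem : (r + 1, c) ∈ Y := Y.up_left_mem (by omega) le_rfl hm1
    have hgt := T.col_strict (by omega : r < r + 1) hmem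
    have hlt := T.col_strict h hm1
    omega
  · have : r' = r + 1 := by omega
    rw [this]

theorem not_H_and_V {a : ℕ} : ¬(IsH T a ∧ IsV T a) := by
  rintro ⟨h1, h2⟩
  rw [IsH] at h1
  rw [IsV] at h2
  rw [h1] at h2
  have := congrArg Prod.fst h2
  simp at this

/-- trichotomy: if neither `IsH` nor `IsV`, positions are in different rows and columns -/
theorem legal_of_not_adj {a : ℕ} (h1 : 1 ≤ a) (h2 : a + 1 ≤ Y.card)
    (hH : ¬IsH T a) (hV : ¬IsV T a) :
    (T.pos a).1 ≠ (T.pos (a + 1)).1 ∧ (T.pos a).2 ≠ (T.pos (a + 1)).2 := by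
  constructor
  · intro h; exact hH (T.same_row_adj h1 h2 h)
  · intro h; exact hV (T.same_col_adj h1 h2 h)

end Geometry

section Sep2

variable (T : SYT Y)

theorem no_reverse_h {v w : ℕ} (hv : v ∈ Set.Icc 1 Y.card) (hw : w ∈ Set.Icc 1 Y.card)
    (hlt : v < w) : T.pos v ≠ ((T.pos w).1, (T.pos w).2 + 1) := by
  intro h
  obtain ⟨hmv, hev⟩ := T.pos_spec hv
  obtain ⟨hmw, hew⟩ := T.pos_spec hw
  have hmem : ((T.pos w).1, (T.pos w).2 + 1) ∈ Y := h ▸ hmv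
  have := T.row_strict (by omega : (T.pos w).2 < (T.pos w).2 + 1) hmem
  rw [show T.entry (T.pos w).1 ((T.pos w).2 + 1)
      = T.entry ((T.pos w).1, (T.pos w).2 + 1).1 ((T.pos w).1, (T.pos w).2 + 1).2 from rfl,
    ← h, hev, hew] at this
  omega

theorem no_reverse_v {v w : ℕ} (hv : v ∈ Set.Icc 1 Y.card) (hw : w ∈ Set.Icc 1 Y.card)
    (hlt : v < w) : T.pos v ≠ ((T.pos w).1 + 1, (T.pos w).2) := by
  intro h
  obtain ⟨hmv, hev⟩ := T.pos_spec hv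
  obtain ⟨hmw, hew⟩ := T.pos_spec hw
  have hmem : ((T.pos w).1 + 1, (T.pos w).2) ∈ Y := h ▸ hmv
  have := T.col_strict (by omega : (T.pos w).1 < (T.pos w).1 + 1) hmem
  rw [show T.entry ((T.pos w).1 + 1) (T.pos w).2
      = T.entry ((T.pos w).1 + 1, (T.pos w).2).1 ((T.pos w).1 + 1, (T.pos w).2).2 from rfl,
    ← h, hev, hew] at this
  omega

theorem row_sep2 {a : ℕ} (h1 : 1 ≤ a) (h2 : a + 2 ≤ Y.card)
    (hrow : (T.pos a).1 = (T.pos (a + 2)).1) :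
    T.pos (a + 2) = ((T.pos a).1, (T.pos a).2 + 1)
      ∨ T.pos (a + 1) = ((T.pos a).1, (T.pos a).2 + 1) := by
  have ha : a ∈ Set.Icc 1 Y.card := ⟨h1, by omega⟩
  have ha1 : a + 1 ∈ Set.Icc 1 Y.card := ⟨by omega, by omega⟩
  have ha2 : a + 2 ∈ Set.Icc 1 Y.card := ⟨by omega, h2⟩
  obtain ⟨hm, he⟩ := T.pos_spec ha
  obtain ⟨hm2, he2⟩ := T.pos_spec ha2
  have hpq : T.pos a ≠ T.pos (a + 2) := T.pos_ne_pos ha ha2 (by omega)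
  rcases hp : T.pos a with ⟨r, c⟩
  rcases hq : T.pos (a + 2) with ⟨r', c''⟩
  rw [hp] at he hm hrow hpq
  rw [hq] at he2 hm2 hrow hpq
  simp only at he he2 hrow
  subst hrow
  have hcol : c < c'' := by
    rcases lt_trichotomy c c'' with h | h | h
    · exact h
    · exact absurd (by rw [h]) hpq
    · have := T.row_strict h hm
      omega
  rcases Nat.lt_or_ge (c + 1) c'' with h | h
  · right
    have hmem : (r, c + 1) ∈ Y := Y.up_left_mem le_rfl (by omega) hm2
    have hgt := T.row_strict (by omega : c < c + 1) hmem
    have hlt := T.row_strict h hm2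
    have : T.entry r (c + 1) = a + 1 := by omega
    exact (T.eq_pos hmem this).symm
  · left
    have : c'' = c + 1 := by omega
    rw [this]

theorem col_sep2 {a : ℕ} (h1 : 1 ≤ a) (h2 : a + 2 ≤ Y.card)
    (hcol : (T.pos a).2 = (T.pos (a + 2)).2) :
    T.pos (a + 2) = ((T.pos a).1 + 1, (T.pos a).2)
      ∨ T.pos (a + 1) = ((T.pos a).1 + 1, (T.pos a).2) := by
  have ha : a ∈ Set.Icc 1 Y.card := ⟨h1, by omega⟩
  have ha2 : a + 2 ∈ Set.Icc 1 Y.card := ⟨by omega, h2⟩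
  obtain ⟨hm, he⟩ := T.pos_spec ha
  obtain ⟨hm2, he2⟩ := T.pos_spec ha2
  have hpq : T.pos a ≠ T.pos (a + 2) := T.pos_ne_pos ha ha2 (by omega)
  rcases hp : T.pos a with ⟨r, c⟩
  rcases hq : T.pos (a + 2) with ⟨r'', c'⟩
  rw [hp] at he hm hcol hpq
  rw [hq] at he2 hm2 hcol hpq
  simp only at he he2 hcol
  subst hcol
  have hrow : r < r'' := by
    rcases lt_trichotomy r r'' with h | h | h
    · exact h
    · exact absurd (by rw [h]) hpq
    · have := T.col_strict h hm
      omega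
  rcases Nat.lt_or_ge (r + 1) r'' with h | h
  · right
    have hmem : (r + 1, c) ∈ Y := Y.up_left_mem (by omega) le_rfl hm2
    have hgt := T.col_strict (by omega : r < r + 1) hmem
    have hlt := T.col_strict h hm2
    have : T.entry (r + 1) c = a + 1 := by omega
    exact (T.eq_pos hmem this).symm
  · left
    have : r'' = r + 1 := by omega
    rw [this]

theorem noL_HV {a : ℕ} (h1 : 1 ≤ a) (h2 : a + 2 ≤ Y.card)
    (hH : IsH T a) (hV : IsV T (a + 1)) : False := by
  have ha : a ∈ Set.Icc 1 Y.card := ⟨h1, by omega⟩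
  have ha1 : a + 1 ∈ Set.Icc 1 Y.card := ⟨by omega, by omega⟩
  have ha2 : a + 2 ∈ Set.Icc 1 Y.card := ⟨by omega, h2⟩
  obtain ⟨hm, he⟩ := T.pos_spec ha
  obtain ⟨hm1, he1⟩ := T.pos_spec ha1
  obtain ⟨hm2, he2⟩ := T.pos_spec ha2
  rw [IsH] at hH
  rw [IsV] at hV
  rcases hp : T.pos a with ⟨r, c⟩
  rw [hp] at hH he hm
  simp only at hH he
  rw [hH] at he1 hm1 hV
  simp only at hV he1
  rw [hV] at he2 hm2
  simp only at he2
  -- the cell (r+1, c) is in Y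
  have hmem : (r + 1, c) ∈ Y := Y.up_left_mem le_rfl (by omega) hm2
  have hgt := T.col_strict (by omega : r < r + 1) hmem
  rw [he] at hgt
  have hlt := T.row_strict (by omega : c < c + 1) hm2
  rw [he2] at hlt
  have hx : T.entry (r + 1) c = a + 1 := by omega
  have := T.eq_pos hmem hx
  rw [hH] at this
  simp at this

theorem noL_VH {a : ℕ} (h1 : 1 ≤ a) (h2 : a + 2 ≤ Y.card)
    (hV : IsV T a) (hH : IsH T (a + 1)) : False := by
  have ha : a ∈ Set.Icc 1 Y.card := ⟨h1, by omega⟩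
  have ha1 : a + 1 ∈ Set.Icc 1 Y.card := ⟨by omega, by omega⟩
  have ha2 : a + 2 ∈ Set.Icc 1 Y.card := ⟨by omega, h2⟩
  obtain ⟨hm, he⟩ := T.pos_spec ha
  obtain ⟨hm1, he1⟩ := T.pos_spec ha1
  obtain ⟨hm2, he2⟩ := T.pos_spec ha2
  rw [IsV] at hV
  rw [IsH] at hH
  rcases hp : T.pos a with ⟨r, c⟩
  rw [hp] at hV he hm
  simp only at hV he
  rw [hV] at he1 hm1 hH
  simp only at hH he1
  rw [hH] at he2 hm2
  simp only at he2
  have hmem : (r, c + 1) ∈ Y := Y.up_left_mem (by omega) le_rfl hm2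
  have hgt := T.row_strict (by omega : c < c + 1) hmem
  rw [he] at hgt
  have hlt := T.col_strict (by omega : r < r + 1) hm2
  rw [he2] at hlt
  have hx : T.entry r (c + 1) = a + 1 := by omega
  have := T.eq_pos hmem hx
  rw [hV] at this
  simp at this

end Sep2

section Swap

/-- the transposition of `u` and `u+1` as a function on values -/
def swapFn (u : ℕ) : ℕ → ℕ := fun v => if v = u then u + 1 else if v = u + 1 then u else v

theorem swapFn_invol (u v : ℕ) : swapFn u (swapFn u v) = v := by
  simp only [swapFn]
  split_ifs <;> first | contradiction | omega

theorem swapFn_lt {u a b : ℕ} (hab : a < b) (hne : ¬(a = u ∧ b = u + 1)) :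
    swapFn u a < swapFn u b := by
  simp only [swapFn]
  split_ifs <;> first | contradiction | omega

theorem swapFn_mem {u v : ℕ} {n : ℕ} (h1 : 1 ≤ u) (h2 : u + 1 ≤ n)
    (hv : v ∈ Set.Icc 1 n) : swapFn u v ∈ Set.Icc 1 n := by
  rw [Set.mem_Icc] at *
  simp only [swapFn]
  split_ifs <;> first | contradiction | omega

variable {Y : YoungDiagram}

open scoped Classical

/-- legality of swapping values `u` and `u+1` -/
def LegalSwap (T : SYT Y) (u : ℕ) : Prop :=
  1 ≤ u ∧ u + 1 ≤ Y.card ∧ (T.pos u).1 ≠ (T.pos (u + 1)).1 ∧ (T.pos u).2 ≠ (T.pos (u + 1)).2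

/-- swap the values `u`, `u+1` in a tableau (when legal) -/
noncomputable def swapT (u : ℕ) (T : SYT Y) : SYT Y :=
  if h : LegalSwap T u then
    { entry := fun i j => swapFn u (T.entry i j)
      bijOn := by
        obtain ⟨h1, h2, hr, hc⟩ := h
        refine ⟨?_, ?_, ?_⟩
        · intro c hc'
          rw [Finset.mem_coe, YoungDiagram.mem_cells] at hc'
          exact swapFn_mem h1 h2 (T.entry_mem hc')
        · intro c hc1 c' hc2 hcc
          refine T.bijOn.injOn hc1 hc2 ?_
          have := congrArg (swapFn u) hcc
          simpa only [swapFn_invol] using this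
        · intro v hv
          obtain ⟨c, hc', hcv⟩ := T.bijOn.surjOn (swapFn_mem h1 h2 hv)
          have hcv' : T.entry c.1 c.2 = swapFn u v := hcv
          exact ⟨c, hc', by show swapFn u (T.entry c.1 c.2) = v; rw [hcv', swapFn_invol]⟩
      row_strict := by
        obtain ⟨h1, h2, hr, hc⟩ := h
        intro i j1 j2 hj hj2
        have hj1 : (i, j1) ∈ Y := Y.up_left_mem le_rfl (le_of_lt hj) hj2
        refine swapFn_lt (T.row_strict hj hj2) ?_
        rintro ⟨e1, e2⟩
        have p1 : (i, j1) = T.pos u := T.eq_pos hj1 e1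
        have p2 : (i, j2) = T.pos (u + 1) := T.eq_pos hj2 e2
        rw [← p1, ← p2] at hr
        exact hr rfl
      col_strict := by
        obtain ⟨h1, h2, hr, hc⟩ := h
        intro i1 i2 j hi hi2
        have hi1 : (i1, j) ∈ Y := Y.up_left_mem (le_of_lt hi) le_rfl hi2
        refine swapFn_lt (T.col_strict hi hi2) ?_
        rintro ⟨e1, e2⟩
        have p1 : (i1, j) = T.pos u := T.eq_pos hi1 e1
        have p2 : (i2, j) = T.pos (u + 1) := T.eq_pos hi2 e2
        rw [← p1, ← p2] at hc
        exact hc rfl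
      zeros := by
        obtain ⟨h1, h2, hr, hc⟩ := h
        intro i j hij
        show swapFn u (T.entry i j) = 0
        rw [T.zeros hij]
        simp only [swapFn]
        split_ifs <;> first | contradiction | omega }
  else T

theorem swapT_of_not {T : SYT Y} {u : ℕ} (h : ¬LegalSwap T u) : swapT u T = T := by
  rw [swapT, dif_neg h]

theorem swapT_entry {T : SYT Y} {u : ℕ} (h : LegalSwap T u) (i j : ℕ) :
    (swapT u T).entry i j = swapFn u (T.entry i j) := by
  rw [swapT, dif_pos h]

theorem swapT_pos {T : SYT Y} {u : ℕ} (h : LegalSwap T u) {v : ℕ}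
    (hv : v ∈ Set.Icc 1 Y.card) : (swapT u T).pos v = T.pos (swapFn u v) := by
  have hv' : swapFn u v ∈ Set.Icc 1 Y.card := swapFn_mem h.1 h.2.1 hv
  obtain ⟨hm, he⟩ := T.pos_spec hv'
  refine ((swapT u T).eq_pos hm ?_).symm
  rw [swapT_entry h, he, swapFn_invol]

theorem swapT_pos_u {T : SYT Y} {u : ℕ} (h : LegalSwap T u) :
    (swapT u T).pos u = T.pos (u + 1) := by
  rw [swapT_pos h ⟨h.1, by have := h.2.1; omega⟩]
  congr 1
  simp [swapFn]

theorem swapT_pos_u1 {T : SYT Y} {u : ℕ} (h : LegalSwap T u) :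
    (swapT u T).pos (u + 1) = T.pos u := by
  rw [swapT_pos h ⟨by omega, h.2.1⟩]
  congr 1
  simp only [swapFn]
  split_ifs <;> first | contradiction | omega

theorem swapT_pos_other {T : SYT Y} {u : ℕ} (h : LegalSwap T u) {v : ℕ}
    (hv : v ∈ Set.Icc 1 Y.card) (h1 : v ≠ u) (h2 : v ≠ u + 1) :
    (swapT u T).pos v = T.pos v := by
  rw [swapT_pos h hv]
  congr 1
  simp only [swapFn]
  split_ifs <;> first | contradiction | omega

theorem legalSwap_swapT {T : SYT Y} {u : ℕ} (h : LegalSwap T u) :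
    LegalSwap (swapT u T) u := by
  refine ⟨h.1, h.2.1, ?_, ?_⟩
  · rw [swapT_pos_u h, swapT_pos_u1 h]
    exact h.2.2.1.symm
  · rw [swapT_pos_u h, swapT_pos_u1 h]
    exact h.2.2.2.symm

theorem swapT_swapT (u : ℕ) (T : SYT Y) : swapT u (swapT u T) = T := by
  by_cases h : LegalSwap T u
  · have h2 := legalSwap_swapT h
    apply ext'_s17
    funext i j
    rw [swapT_entry h2, swapT_entry h, swapFn_invol]
  · rw [swapT_of_not h, swapT_of_not h]

theorem swapT_involutive (u : ℕ) : Function.Involutive (swapT u : SYT Y → SYT Y) :=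
  fun T => swapT_swapT u T

theorem swapT_ne {T : SYT Y} {u : ℕ} (h : LegalSwap T u) : swapT u T ≠ T := by
  intro hEq
  have h1 : (swapT u T).pos u = T.pos (u + 1) := swapT_pos_u h
  rw [hEq] at h1
  exact T.pos_ne_pos ⟨h.1, by have := h.2.1; omega⟩ ⟨by omega, h.2.1⟩ (by omega) h1

end Swap

section Stats

open scoped Classical

variable {Y : YoungDiagram}

noncomputable instance : Fintype (SYT Y) := Fintype.ofFinite _

/-- content of the cell containing `v` -/
noncomputable def gamma (T : SYT Y) (v : ℕ) : ℤ := ((T.pos v).2 : ℤ) - ((T.pos v).1 : ℤ)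

noncomputable def eps (T : SYT Y) (u : ℕ) : ℤ := if IsH T u then 1 else if IsV T u then -1 else 0

noncomputable def dlt (T : SYT Y) (u : ℕ) : ℤ := gamma T (u + 1) - gamma T u

theorem dlt_of_H {T : SYT Y} {u : ℕ} (h : IsH T u) : dlt T u = 1 := by
  rw [dlt, gamma, gamma, IsH] at *
  rw [h]
  push_cast
  ring

theorem dlt_of_V {T : SYT Y} {u : ℕ} (h : IsV T u) : dlt T u = -1 := by
  rw [dlt, gamma, gamma, IsV] at *
  rw [h]
  push_cast
  ring

theorem eps_of_H {T : SYT Y} {u : ℕ} (h : IsH T u) : eps T u = 1 := by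
  rw [eps, if_pos h]

theorem eps_of_V {T : SYT Y} {u : ℕ} (h : IsV T u) : eps T u = -1 := by
  have : ¬ IsH T u := fun h' => T.not_H_and_V ⟨h', h⟩
  rw [eps, if_neg this, if_pos h]

theorem eps_of_n {T : SYT Y} {u : ℕ} (h1 : ¬IsH T u) (h2 : ¬IsV T u) : eps T u = 0 := by
  rw [eps, if_neg h1, if_neg h2]

theorem not_legal_of_H {T : SYT Y} {u : ℕ} (h : IsH T u) : ¬LegalSwap T u := by
  rintro ⟨-, -, hr, -⟩
  rw [IsH] at h
  rw [h] at hr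
  exact hr rfl

theorem not_legal_of_V {T : SYT Y} {u : ℕ} (h : IsV T u) : ¬LegalSwap T u := by
  rintro ⟨-, -, -, hc⟩
  rw [IsV] at h
  rw [h] at hc
  exact hc rfl

theorem legal_of_n {T : SYT Y} {u : ℕ} (h1 : 1 ≤ u) (h2 : u + 1 ≤ Y.card)
    (hH : ¬IsH T u) (hV : ¬IsV T u) : LegalSwap T u := by
  obtain ⟨hr, hc⟩ := T.legal_of_not_adj h1 h2 hH hV
  exact ⟨h1, h2, hr, hc⟩

theorem dlt_swapT {T : SYT Y} {u : ℕ} (h : LegalSwap T u) :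
    dlt (swapT u T) u = - dlt T u := by
  rw [dlt, dlt, gamma, gamma, gamma, gamma, swapT_pos_u h, swapT_pos_u1 h]
  ring

theorem isDescent_iff (T : SYT Y) {u : ℕ} (h1 : 1 ≤ u) (h2 : u + 1 ≤ Y.card) :
    T.IsDescent u ↔ (T.pos u).1 < (T.pos (u + 1)).1 := by
  constructor
  · rintro ⟨c, hc, c', hc', he, he', hlt⟩
    rw [YoungDiagram.mem_cells] at hc hc'
    rw [← T.eq_pos hc he, ← T.eq_pos hc' he']
    exact hlt
  · intro h
    obtain ⟨hm, he⟩ := T.pos_spec (⟨h1, by omega⟩ : u ∈ Set.Icc 1 Y.card)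
    obtain ⟨hm1, he1⟩ := T.pos_spec (⟨by omega, h2⟩ : u + 1 ∈ Set.Icc 1 Y.card)
    exact ⟨T.pos u, (YoungDiagram.mem_cells _).2 hm, T.pos (u + 1),
      (YoungDiagram.mem_cells _).2 hm1, he, he1, h⟩

theorem not_descent_of_H {T : SYT Y} {u : ℕ} (h1 : 1 ≤ u) (h2 : u + 1 ≤ Y.card)
    (h : IsH T u) : ¬T.IsDescent u := by
  rw [T.isDescent_iff h1 h2]
  rw [IsH] at h
  rw [h]
  omega

theorem descent_of_V {T : SYT Y} {u : ℕ} (h1 : 1 ≤ u) (h2 : u + 1 ≤ Y.card)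
    (h : IsV T u) : T.IsDescent u := by
  rw [T.isDescent_iff h1 h2]
  rw [IsV] at h
  rw [h]
  omega

theorem sum_comp_swapT (u : ℕ) (g : SYT Y → ℤ) :
    ∑ T : SYT Y, g (swapT u T) = ∑ T : SYT Y, g T :=
  Fintype.sum_bijective (swapT u) (swapT_involutive u).bijective _ _ (fun _ => rfl)

theorem sum_dlt_eq_sum_eps {u : ℕ} (h1 : 1 ≤ u) (h2 : u + 1 ≤ Y.card) :
    ∑ T : SYT Y, dlt T u = ∑ T : SYT Y, eps T u := by
  have key : ∀ T : SYT Y, dlt T u + dlt (swapT u T) u = 2 * eps T u := by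
    intro T
    by_cases hH : IsH T u
    · rw [swapT_of_not (not_legal_of_H hH), dlt_of_H hH, eps_of_H hH]; ring
    · by_cases hV : IsV T u
      · rw [swapT_of_not (not_legal_of_V hV), dlt_of_V hV, eps_of_V hV]; ring
      · have hleg := legal_of_n h1 h2 hH hV
        rw [dlt_swapT hleg, eps_of_n hH hV]; ring
  have h2' : ∑ T : SYT Y, (dlt T u + dlt (swapT u T) u) = ∑ T : SYT Y, 2 * eps T u :=
    Finset.sum_congr rfl (fun T _ => key T)
  rw [Finset.sum_add_distrib, sum_comp_swapT u (fun T => dlt T u), ← Finset.mul_sum] at h2'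
  omega

theorem sum_desc_eq {u : ℕ} (h1 : 1 ≤ u) (h2 : u + 1 ≤ Y.card) :
    2 * ∑ T : SYT Y, (if T.IsDescent u then (1 : ℤ) else 0)
      = ∑ T : SYT Y, (1 - eps T u) := by
  have key : ∀ T : SYT Y,
      (if T.IsDescent u then (1 : ℤ) else 0)
        + (if (swapT u T).IsDescent u then (1 : ℤ) else 0) = 1 - eps T u := by
    intro T
    by_cases hH : IsH T u
    · rw [swapT_of_not (not_legal_of_H hH), eps_of_H hH,
        if_neg (not_descent_of_H h1 h2 hH)]
      ring
    · by_cases hV : IsV T u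
      · rw [swapT_of_not (not_legal_of_V hV), eps_of_V hV,
          if_pos (descent_of_V h1 h2 hV)]
        ring
      · have hleg := legal_of_n h1 h2 hH hV
        have hrow := hleg.2.2.1
        rw [eps_of_n hH hV]
        rw [T.isDescent_iff h1 h2, (swapT u T).isDescent_iff h1 h2,
          swapT_pos_u hleg, swapT_pos_u1 hleg]
        rcases Nat.lt_or_ge (T.pos u).1 (T.pos (u + 1)).1 with h | h
        · rw [if_pos h, if_neg (by omega)]; ring
        · have hlt : (T.pos (u + 1)).1 < (T.pos u).1 := by
            rcases Nat.lt_or_ge (T.pos (u+1)).1 (T.pos u).1 with h' | h'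
            · exact h'
            · exact absurd (by omega) hrow
          rw [if_neg (by omega), if_pos hlt]; ring
  have h2' : ∑ T : SYT Y,
      ((if T.IsDescent u then (1 : ℤ) else 0)
        + (if (swapT u T).IsDescent u then (1 : ℤ) else 0))
      = ∑ T : SYT Y, (1 - eps T u) :=
    Finset.sum_congr rfl (fun T _ => key T)
  rw [Finset.sum_add_distrib,
    sum_comp_swapT u (fun T => if T.IsDescent u then (1 : ℤ) else 0)] at h2'
  rw [← h2']
  ring

end Stats

section Exchange

open scoped Classical

variable {Y : YoungDiagram}

theorem eps_congr {T T' : SYT Y} {a b : ℕ}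
    (h1 : T'.pos b = T.pos a) (h2 : T'.pos (b + 1) = T.pos (a + 1)) :
    eps T' b = eps T a := by
  rw [eps, eps, IsH, IsH, IsV, IsV, h1, h2]

theorem caseA {T : SYT Y} {u : ℕ} (hu : 1 ≤ u) (hn : u + 2 ≤ Y.card)
    (hD1 : IsH T u ∨ IsV T u) (hD2 : IsH T (u + 1) ∨ IsV T (u + 1)) :
    eps T u = eps T (u + 1) := by
  rcases hD1 with h1 | h1 <;> rcases hD2 with h2 | h2
  · rw [eps_of_H h1, eps_of_H h2]
  · exact absurd (T.noL_HV hu hn h1 h2) (fun h => h)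
  · exact absurd (T.noL_VH hu hn h1 h2) (fun h => h)
  · rw [eps_of_V h1, eps_of_V h2]

theorem caseB {T : SYT Y} {u : ℕ} (hu : 1 ≤ u) (hn : u + 2 ≤ Y.card)
    (hD1 : IsH T u ∨ IsV T u) (hH2 : ¬IsH T (u + 1)) (hV2 : ¬IsV T (u + 1))
    (hAdj : T.pos (u + 2) = ((T.pos u).1 + 1, (T.pos u).2)
      ∨ T.pos (u + 2) = ((T.pos u).1, (T.pos u).2 + 1)) :
    LegalSwap T (u + 1) ∧
    eps (swapT (u + 1) T) u = -eps T u ∧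
    (IsH (swapT (u + 1) T) u ∨ IsV (swapT (u + 1) T) u) ∧
    ¬IsH (swapT (u + 1) T) (u + 1) ∧ ¬IsV (swapT (u + 1) T) (u + 1) ∧
    ((swapT (u + 1) T).pos (u + 2)
        = (((swapT (u + 1) T).pos u).1 + 1, ((swapT (u + 1) T).pos u).2)
      ∨ (swapT (u + 1) T).pos (u + 2)
        = (((swapT (u + 1) T).pos u).1, ((swapT (u + 1) T).pos u).2 + 1)) := by
  have hmu : u ∈ Set.Icc 1 Y.card := ⟨hu, by omega⟩
  have hmu1 : u + 1 ∈ Set.Icc 1 Y.card := ⟨by omega, by omega⟩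
  have hmu2 : u + 2 ∈ Set.Icc 1 Y.card := ⟨by omega, hn⟩
  have hleg : LegalSwap T (u + 1) := legal_of_n (by omega) (by omega) hH2 hV2
  have hp1 : (swapT (u + 1) T).pos u = T.pos u :=
    swapT_pos_other hleg hmu (by omega) (by omega)
  have hp2 : (swapT (u + 1) T).pos (u + 1) = T.pos (u + 2) := swapT_pos_u hleg
  have hp3 : (swapT (u + 1) T).pos (u + 2) = T.pos (u + 1) := swapT_pos_u1 hleg
  have hne23 : T.pos (u + 1) ≠ T.pos (u + 2) := T.pos_ne_pos hmu1 hmu2 (by omega)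
  refine ⟨hleg, ?_, ?_, ?_, ?_, ?_⟩
  · -- eps flip
    rcases hAdj with hA | hA
    · have hV' : IsV (swapT (u + 1) T) u := by rw [IsV, hp2, hp1]; exact hA
      have hH1 : IsH T u := by
        rcases hD1 with h | h
        · exact h
        · exact absurd (h.trans hA.symm) hne23
      rw [eps_of_V hV', eps_of_H hH1]
    · have hH' : IsH (swapT (u + 1) T) u := by rw [IsH, hp2, hp1]; exact hA
      have hV1 : IsV T u := by
        rcases hD1 with h | h
        · exact absurd (h.trans hA.symm) hne23
        · exact h
      rw [eps_of_H hH', eps_of_V hV1]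
      norm_num
  · rcases hAdj with hA | hA
    · exact Or.inr (by rw [IsV, hp2, hp1]; exact hA)
    · exact Or.inl (by rw [IsH, hp2, hp1]; exact hA)
  · rw [IsH, hp3, hp2]
    exact T.no_reverse_h hmu1 hmu2 (by omega)
  · rw [IsV, hp3, hp2]
    exact T.no_reverse_v hmu1 hmu2 (by omega)
  · rw [hp3, hp1]
    rcases hD1 with h | h
    · exact Or.inr h
    · exact Or.inl h

theorem caseC {T : SYT Y} {u : ℕ} (hu : 1 ≤ u) (hn : u + 2 ≤ Y.card)
    (hD1 : IsH T u ∨ IsV T u) (hH2 : ¬IsH T (u + 1)) (hV2 : ¬IsV T (u + 1))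
    (hA1 : ¬T.pos (u + 2) = ((T.pos u).1 + 1, (T.pos u).2))
    (hA2 : ¬T.pos (u + 2) = ((T.pos u).1, (T.pos u).2 + 1)) :
    LegalSwap T (u + 1) ∧ LegalSwap (swapT (u + 1) T) u ∧
    (eps (swapT u (swapT (u + 1) T)) (u + 1) = eps T u ∧
    ¬IsH (swapT u (swapT (u + 1) T)) u ∧ ¬IsV (swapT u (swapT (u + 1) T)) u ∧
    (IsH (swapT u (swapT (u + 1) T)) (u + 1) ∨ IsV (swapT u (swapT (u + 1) T)) (u + 1)) ∧
    ¬(swapT u (swapT (u + 1) T)).pos (u + 2)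
        = (((swapT u (swapT (u + 1) T)).pos u).1 + 1, ((swapT u (swapT (u + 1) T)).pos u).2) ∧
    ¬(swapT u (swapT (u + 1) T)).pos (u + 2)
        = (((swapT u (swapT (u + 1) T)).pos u).1, ((swapT u (swapT (u + 1) T)).pos u).2 + 1)) := by
  have hmu : u ∈ Set.Icc 1 Y.card := ⟨hu, by omega⟩
  have hmu1 : u + 1 ∈ Set.Icc 1 Y.card := ⟨by omega, by omega⟩
  have hmu2 : u + 2 ∈ Set.Icc 1 Y.card := ⟨by omega, hn⟩
  have hleg1 : LegalSwap T (u + 1) := legal_of_n (by omega) (by omega) hH2 hV2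
  have hq1 : (swapT (u + 1) T).pos u = T.pos u :=
    swapT_pos_other hleg1 hmu (by omega) (by omega)
  have hq2 : (swapT (u + 1) T).pos (u + 1) = T.pos (u + 2) := swapT_pos_u hleg1
  have hq3 : (swapT (u + 1) T).pos (u + 2) = T.pos (u + 1) := swapT_pos_u1 hleg1
  -- legality of the second swap
  have hrow : (T.pos u).1 ≠ (T.pos (u + 2)).1 := by
    intro heq
    rcases hD1 with h | h
    · -- IsH u : rows of u, u+1, u+2 all equal, so u+1,u+2 same row ⇒ IsH (u+1)
      apply hH2
      apply T.same_row_adj (by omega) (by omega)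
      rw [IsH] at h
      show (T.pos (u + 1)).1 = (T.pos (u + 2)).1
      rw [h]
      simpa using heq
    · rcases T.row_sep2 hu hn heq with hd | hd
      · exact hA2 hd
      · rw [IsV] at h
        rw [h] at hd
        simp only [Prod.mk.injEq] at hd
        omega
  have hcol : (T.pos u).2 ≠ (T.pos (u + 2)).2 := by
    intro heq
    rcases hD1 with h | h
    · rcases T.col_sep2 hu hn heq with hd | hd
      · exact hA1 hd
      · rw [IsH] at h
        rw [h] at hd
        simp only [Prod.mk.injEq] at hd
        omega
    · apply hV2
      apply T.same_col_adj (by omega) (by omega)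
      rw [IsV] at h
      show (T.pos (u + 1)).2 = (T.pos (u + 2)).2
      rw [h]
      simpa using heq
  have hleg2 : LegalSwap (swapT (u + 1) T) u := by
    refine ⟨hu, by omega, ?_, ?_⟩
    · rw [hq1, hq2]; exact hrow
    · rw [hq1, hq2]; exact hcol
  have hr1 : (swapT u (swapT (u + 1) T)).pos u = T.pos (u + 2) := by
    rw [swapT_pos_u hleg2, hq2]
  have hr2 : (swapT u (swapT (u + 1) T)).pos (u + 1) = T.pos u := by
    rw [swapT_pos_u1 hleg2, hq1]
  have hr3 : (swapT u (swapT (u + 1) T)).pos (u + 2) = T.pos (u + 1) := by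
    rw [swapT_pos_other hleg2 hmu2 (by omega) (by omega), hq3]
  refine ⟨hleg1, hleg2, ?_, ?_, ?_, ?_, ?_, ?_⟩
  · exact eps_congr hr2 hr3
  · rw [IsH, hr2, hr1]
    exact T.no_reverse_h hmu hmu2 (by omega)
  · rw [IsV, hr2, hr1]
    exact T.no_reverse_v hmu hmu2 (by omega)
  · rcases hD1 with h | h
    · exact Or.inl (by rw [IsH, hr3, hr2]; exact h)
    · exact Or.inr (by rw [IsV, hr3, hr2]; exact h)
  · rw [hr3, hr1]
    exact T.no_reverse_v hmu1 hmu2 (by omega)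
  · rw [hr3, hr1]
    exact T.no_reverse_h hmu1 hmu2 (by omega)

theorem caseE {T : SYT Y} {u : ℕ} (hu : 1 ≤ u) (hn : u + 2 ≤ Y.card)
    (hD2 : IsH T (u + 1) ∨ IsV T (u + 1)) (hH1 : ¬IsH T u) (hV1 : ¬IsV T u)
    (hAdj : T.pos (u + 2) = ((T.pos u).1 + 1, (T.pos u).2)
      ∨ T.pos (u + 2) = ((T.pos u).1, (T.pos u).2 + 1)) :
    LegalSwap T u ∧
    eps (swapT u T) (u + 1) = -eps T (u + 1) ∧
    (IsH (swapT u T) (u + 1) ∨ IsV (swapT u T) (u + 1)) ∧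
    ¬IsH (swapT u T) u ∧ ¬IsV (swapT u T) u ∧
    ((swapT u T).pos (u + 2) = (((swapT u T).pos u).1 + 1, ((swapT u T).pos u).2)
      ∨ (swapT u T).pos (u + 2) = (((swapT u T).pos u).1, ((swapT u T).pos u).2 + 1)) := by
  have hmu : u ∈ Set.Icc 1 Y.card := ⟨hu, by omega⟩
  have hmu1 : u + 1 ∈ Set.Icc 1 Y.card := ⟨by omega, by omega⟩
  have hmu2 : u + 2 ∈ Set.Icc 1 Y.card := ⟨by omega, hn⟩
  have hleg : LegalSwap T u := legal_of_n hu (by omega) hH1 hV1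
  have hp1 : (swapT u T).pos u = T.pos (u + 1) := swapT_pos_u hleg
  have hp2 : (swapT u T).pos (u + 1) = T.pos u := swapT_pos_u1 hleg
  have hp3 : (swapT u T).pos (u + 2) = T.pos (u + 2) :=
    swapT_pos_other hleg hmu2 (by omega) (by omega)
  have hne12 : T.pos u ≠ T.pos (u + 1) := T.pos_ne_pos hmu hmu1 (by omega)
  refine ⟨hleg, ?_, ?_, ?_, ?_, ?_⟩
  · rcases hAdj with hA | hA
    · have hV' : IsV (swapT u T) (u + 1) := by rw [IsV, hp3, hp2]; exact hA
      have h2 : IsH T (u + 1) := by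
        rcases hD2 with h | h
        · exact h
        · -- IsV (u+1) : pos (u+2) = below pos (u+1) and = below pos u ⇒ pos u = pos (u+1)
          exfalso
          rw [IsV] at h
          have h' : T.pos (u + 2) = ((T.pos (u + 1)).1 + 1, (T.pos (u + 1)).2) := h
          rw [h'] at hA
          simp only [Prod.mk.injEq] at hA
          exact hne12 (Prod.ext (by omega) (by omega))
      rw [eps_of_V hV', eps_of_H h2]
    · have hH' : IsH (swapT u T) (u + 1) := by rw [IsH, hp3, hp2]; exact hA
      have h2 : IsV T (u + 1) := by
        rcases hD2 with h | h
        · exfalso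
          rw [IsH] at h
          have h' : T.pos (u + 2) = ((T.pos (u + 1)).1, (T.pos (u + 1)).2 + 1) := h
          rw [h'] at hA
          simp only [Prod.mk.injEq] at hA
          exact hne12 (Prod.ext (by omega) (by omega))
        · exact h
      rw [eps_of_H hH', eps_of_V h2]
      norm_num
  · rcases hAdj with hA | hA
    · exact Or.inr (by rw [IsV, hp3, hp2]; exact hA)
    · exact Or.inl (by rw [IsH, hp3, hp2]; exact hA)
  · rw [IsH, hp2, hp1]
    exact T.no_reverse_h hmu hmu1 (by omega)
  · rw [IsV, hp2, hp1]
    exact T.no_reverse_v hmu hmu1 (by omega)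
  · rw [hp3, hp1]
    rcases hD2 with h | h
    · rw [IsH] at h
      exact Or.inr h
    · rw [IsV] at h
      exact Or.inl h

theorem caseF {T : SYT Y} {u : ℕ} (hu : 1 ≤ u) (hn : u + 2 ≤ Y.card)
    (hD2 : IsH T (u + 1) ∨ IsV T (u + 1)) (hH1 : ¬IsH T u) (hV1 : ¬IsV T u)
    (hA1 : ¬T.pos (u + 2) = ((T.pos u).1 + 1, (T.pos u).2))
    (hA2 : ¬T.pos (u + 2) = ((T.pos u).1, (T.pos u).2 + 1)) :
    LegalSwap T u ∧ LegalSwap (swapT u T) (u + 1) ∧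
    (eps (swapT (u + 1) (swapT u T)) u = eps T (u + 1) ∧
    (IsH (swapT (u + 1) (swapT u T)) u ∨ IsV (swapT (u + 1) (swapT u T)) u) ∧
    ¬IsH (swapT (u + 1) (swapT u T)) (u + 1) ∧ ¬IsV (swapT (u + 1) (swapT u T)) (u + 1) ∧
    ¬(swapT (u + 1) (swapT u T)).pos (u + 2)
        = (((swapT (u + 1) (swapT u T)).pos u).1 + 1, ((swapT (u + 1) (swapT u T)).pos u).2) ∧
    ¬(swapT (u + 1) (swapT u T)).pos (u + 2)
        = (((swapT (u + 1) (swapT u T)).pos u).1, ((swapT (u + 1) (swapT u T)).pos u).2 + 1)) := by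
  have hmu : u ∈ Set.Icc 1 Y.card := ⟨hu, by omega⟩
  have hmu1 : u + 1 ∈ Set.Icc 1 Y.card := ⟨by omega, by omega⟩
  have hmu2 : u + 2 ∈ Set.Icc 1 Y.card := ⟨by omega, hn⟩
  have hleg1 : LegalSwap T u := legal_of_n hu (by omega) hH1 hV1
  have hq1 : (swapT u T).pos u = T.pos (u + 1) := swapT_pos_u hleg1
  have hq2 : (swapT u T).pos (u + 1) = T.pos u := swapT_pos_u1 hleg1
  have hq3 : (swapT u T).pos (u + 2) = T.pos (u + 2) :=
    swapT_pos_other hleg1 hmu2 (by omega) (by omega)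
  have hrow : (T.pos u).1 ≠ (T.pos (u + 2)).1 := by
    intro heq
    rcases hD2 with h | h
    · apply hH1
      apply T.same_row_adj hu (by omega)
      rw [IsH] at h
      have h' : T.pos (u + 2) = ((T.pos (u + 1)).1, (T.pos (u + 1)).2 + 1) := h
      rw [heq, h']
    · rcases T.row_sep2 hu hn heq with hd | hd
      · exact hA2 hd
      · rw [IsV] at h
        have h' : T.pos (u + 2) = ((T.pos (u + 1)).1 + 1, (T.pos (u + 1)).2) := h
        rw [hd] at h'
        rw [h'] at heq
        simp at heq
  have hcol : (T.pos u).2 ≠ (T.pos (u + 2)).2 := by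
    intro heq
    rcases hD2 with h | h
    · rcases T.col_sep2 hu hn heq with hd | hd
      · exact hA1 hd
      · rw [IsH] at h
        have h' : T.pos (u + 2) = ((T.pos (u + 1)).1, (T.pos (u + 1)).2 + 1) := h
        rw [hd] at h'
        rw [h'] at heq
        simp at heq
    · apply hV1
      apply T.same_col_adj hu (by omega)
      rw [IsV] at h
      have h' : T.pos (u + 2) = ((T.pos (u + 1)).1 + 1, (T.pos (u + 1)).2) := h
      rw [heq, h']
  have hleg2 : LegalSwap (swapT u T) (u + 1) := by
    refine ⟨by omega, by omega, ?_, ?_⟩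
    · rw [hq2, hq3]; exact hrow
    · rw [hq2, hq3]; exact hcol
  have hr1 : (swapT (u + 1) (swapT u T)).pos u = T.pos (u + 1) := by
    rw [swapT_pos_other hleg2 hmu (by omega) (by omega), hq1]
  have hr2 : (swapT (u + 1) (swapT u T)).pos (u + 1) = T.pos (u + 2) := by
    rw [swapT_pos_u hleg2, hq3]
  have hr3 : (swapT (u + 1) (swapT u T)).pos (u + 2) = T.pos u := by
    rw [swapT_pos_u1 hleg2, hq2]
  refine ⟨hleg1, hleg2, ?_, ?_, ?_, ?_, ?_, ?_⟩
  · exact eps_congr hr1 hr2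
  · rcases hD2 with h | h
    · exact Or.inl (by rw [IsH, hr2, hr1]; exact h)
    · exact Or.inr (by rw [IsV, hr2, hr1]; exact h)
  · rw [IsH, hr3, hr2]
    exact T.no_reverse_h hmu hmu2 (by omega)
  · rw [IsV, hr3, hr2]
    exact T.no_reverse_v hmu hmu2 (by omega)
  · rw [hr3, hr1]
    exact T.no_reverse_v hmu hmu1 (by omega)
  · rw [hr3, hr1]
    exact T.no_reverse_h hmu hmu1 (by omega)

end Exchange

section ExchangeSum

open scoped Classical

variable {Y : YoungDiagram}

/-- the key exchange identity: `∑_T ε_u(T)` does not depend on `u`. -/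
theorem sum_eps_eq {u : ℕ} (hu : 1 ≤ u) (hn : u + 2 ≤ Y.card) :
    ∑ T : SYT Y, eps T u = ∑ T : SYT Y, eps T (u + 1) := by
  set D1 : SYT Y → Prop := fun T => IsH T u ∨ IsV T u with hD1def
  set D2 : SYT Y → Prop := fun T => IsH T (u + 1) ∨ IsV T (u + 1) with hD2def
  set A : SYT Y → Prop := fun T =>
    T.pos (u + 2) = ((T.pos u).1 + 1, (T.pos u).2)
      ∨ T.pos (u + 2) = ((T.pos u).1, (T.pos u).2 + 1) with hAdef
  have e1 : ∑ T ∈ Finset.univ.filter D1, eps T u = ∑ T : SYT Y, eps T u := by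
    apply Finset.sum_filter_of_ne
    intro T _ hne
    by_contra hcon
    rw [not_or] at hcon
    exact hne (eps_of_n hcon.1 hcon.2)
  have e2 : ∑ T ∈ Finset.univ.filter D2, eps T (u + 1)
      = ∑ T : SYT Y, eps T (u + 1) := by
    apply Finset.sum_filter_of_ne
    intro T _ hne
    by_contra hcon
    rw [not_or] at hcon
    exact hne (eps_of_n hcon.1 hcon.2)
  rw [← e1, ← e2]
  have s1 : ∑ T ∈ Finset.univ.filter D1, eps T u
      = ∑ T ∈ (Finset.univ.filter D1).filter D2, eps T u
        + ∑ T ∈ (Finset.univ.filter D1).filter (fun T => ¬D2 T), eps T u :=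
    (Finset.sum_filter_add_sum_filter_not _ _ _).symm
  have s2 : ∑ T ∈ Finset.univ.filter D2, eps T (u + 1)
      = ∑ T ∈ (Finset.univ.filter D2).filter D1, eps T (u + 1)
        + ∑ T ∈ (Finset.univ.filter D2).filter (fun T => ¬D1 T), eps T (u + 1) :=
    (Finset.sum_filter_add_sum_filter_not _ _ _).symm
  rw [s1, s2]
  have inter : ∑ T ∈ (Finset.univ.filter D1).filter D2, eps T u
      = ∑ T ∈ (Finset.univ.filter D2).filter D1, eps T (u + 1) := by
    have hset : (Finset.univ.filter D1).filter D2 = (Finset.univ.filter D2).filter D1 := by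
      ext T
      simp only [Finset.mem_filter]
      tauto
    rw [hset]
    apply Finset.sum_congr rfl
    intro T hT
    simp only [Finset.mem_filter] at hT
    exact caseA hu hn hT.2 hT.1.2
  rw [inter]
  congr 1
  have s3 : ∑ T ∈ (Finset.univ.filter D1).filter (fun T => ¬D2 T), eps T u
      = ∑ T ∈ ((Finset.univ.filter D1).filter (fun T => ¬D2 T)).filter A, eps T u
        + ∑ T ∈ ((Finset.univ.filter D1).filter (fun T => ¬D2 T)).filter (fun T => ¬A T),
            eps T u :=
    (Finset.sum_filter_add_sum_filter_not _ _ _).symm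
  have s4 : ∑ T ∈ (Finset.univ.filter D2).filter (fun T => ¬D1 T), eps T (u + 1)
      = ∑ T ∈ ((Finset.univ.filter D2).filter (fun T => ¬D1 T)).filter A, eps T (u + 1)
        + ∑ T ∈ ((Finset.univ.filter D2).filter (fun T => ¬D1 T)).filter (fun T => ¬A T),
            eps T (u + 1) :=
    (Finset.sum_filter_add_sum_filter_not _ _ _).symm
  rw [s3, s4]
  have z1 : ∑ T ∈ ((Finset.univ.filter D1).filter (fun T => ¬D2 T)).filter A, eps T u = 0 := by
    apply Finset.sum_involution (fun T _ => swapT (u + 1) T)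
    · intro T hT
      simp only [Finset.mem_filter, Finset.mem_univ, true_and] at hT
      obtain ⟨⟨h1, h2⟩, h3⟩ := hT
      rw [not_or] at h2
      obtain ⟨-, hflip, -⟩ := caseB hu hn h1 h2.1 h2.2 h3
      rw [hflip]; ring
    · intro T hT _
      simp only [Finset.mem_filter, Finset.mem_univ, true_and] at hT
      obtain ⟨⟨h1, h2⟩, h3⟩ := hT
      rw [not_or] at h2
      obtain ⟨hleg, -⟩ := caseB hu hn h1 h2.1 h2.2 h3
      exact swapT_ne hleg
    · intro T hT
      simp only [Finset.mem_filter, Finset.mem_univ, true_and] at hT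
      obtain ⟨⟨h1, h2⟩, h3⟩ := hT
      rw [not_or] at h2
      obtain ⟨-, -, hh1, hh2, hh3, hh4⟩ := caseB hu hn h1 h2.1 h2.2 h3
      simp only [Finset.mem_filter, Finset.mem_univ, true_and]
      exact ⟨⟨hh1, not_or.mpr ⟨hh2, hh3⟩⟩, hh4⟩
    · intro T hT
      exact swapT_swapT (u + 1) T
  have z2 : ∑ T ∈ ((Finset.univ.filter D2).filter (fun T => ¬D1 T)).filter A,
      eps T (u + 1) = 0 := by
    apply Finset.sum_involution (fun T _ => swapT u T)
    · intro T hT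
      simp only [Finset.mem_filter, Finset.mem_univ, true_and] at hT
      obtain ⟨⟨h1, h2⟩, h3⟩ := hT
      rw [not_or] at h2
      obtain ⟨-, hflip, -⟩ := caseE hu hn h1 h2.1 h2.2 h3
      rw [hflip]; ring
    · intro T hT _
      simp only [Finset.mem_filter, Finset.mem_univ, true_and] at hT
      obtain ⟨⟨h1, h2⟩, h3⟩ := hT
      rw [not_or] at h2
      obtain ⟨hleg, -⟩ := caseE hu hn h1 h2.1 h2.2 h3
      exact swapT_ne hleg
    · intro T hT
      simp only [Finset.mem_filter, Finset.mem_univ, true_and] at hT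
      obtain ⟨⟨h1, h2⟩, h3⟩ := hT
      rw [not_or] at h2
      obtain ⟨-, -, hh1, hh2, hh3, hh4⟩ := caseE hu hn h1 h2.1 h2.2 h3
      simp only [Finset.mem_filter, Finset.mem_univ, true_and]
      exact ⟨⟨hh1, not_or.mpr ⟨hh2, hh3⟩⟩, hh4⟩
    · intro T hT
      exact swapT_swapT u T
  rw [z1, z2, zero_add, zero_add]
  -- the bijection between the non-adjacent parts
  apply Finset.sum_nbij' (fun T => swapT u (swapT (u + 1) T))
    (fun T => swapT (u + 1) (swapT u T))
  · intro T hT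
    simp only [Finset.mem_filter, Finset.mem_univ, true_and] at hT ⊢
    obtain ⟨⟨h1, h2⟩, h3⟩ := hT
    rw [not_or] at h2
    rw [not_or] at h3
    obtain ⟨-, -, -, hn1, hn2, hd2, ha1, ha2⟩ := caseC hu hn h1 h2.1 h2.2 h3.1 h3.2
    exact ⟨⟨hd2, not_or.mpr ⟨hn1, hn2⟩⟩, not_or.mpr ⟨ha1, ha2⟩⟩
  · intro T hT
    simp only [Finset.mem_filter, Finset.mem_univ, true_and] at hT ⊢
    obtain ⟨⟨h1, h2⟩, h3⟩ := hT
    rw [not_or] at h2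
    rw [not_or] at h3
    obtain ⟨-, -, -, hd1, hn1, hn2, ha1, ha2⟩ := caseF hu hn h1 h2.1 h2.2 h3.1 h3.2
    exact ⟨⟨hd1, not_or.mpr ⟨hn1, hn2⟩⟩, not_or.mpr ⟨ha1, ha2⟩⟩
  · intro T _
    rw [swapT_swapT, swapT_swapT]
  · intro T _
    rw [swapT_swapT, swapT_swapT]
  · intro T hT
    simp only [Finset.mem_filter, Finset.mem_univ, true_and] at hT
    obtain ⟨⟨h1, h2⟩, h3⟩ := hT
    rw [not_or] at h2
    rw [not_or] at h3
    obtain ⟨-, -, heps, -⟩ := caseC hu hn h1 h2.1 h2.2 h3.1 h3.2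
    exact heps.symm

end ExchangeSum

section Assembly

open scoped Classical

variable {Y : YoungDiagram}

theorem gauss_sum : ∀ m : ℕ, 2 * ∑ i ∈ Finset.range m, (i : ℤ) = (m : ℤ) * ((m : ℤ) - 1) := by
  intro m
  induction m with
  | zero => simp
  | succ k ih =>
    rw [Finset.sum_range_succ, mul_add, ih]
    push_cast
    ring

theorem gauss_sum' : ∀ m : ℕ, 2 * ∑ i ∈ Finset.range m, ((i : ℤ) + 1)
    = (m : ℤ) * ((m : ℤ) + 1) := by
  intro m
  induction m with
  | zero => simp
  | succ k ih =>
    rw [Finset.sum_range_succ, mul_add, ih]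
    push_cast
    ring

theorem abel_sum (F : ℕ → ℤ) (k : ℕ) :
    ∑ i ∈ Finset.range k, ((i : ℤ) + 1) * (F (i + 1) - F i)
      = (k : ℤ) * F k - ∑ i ∈ Finset.range k, F i := by
  induction k with
  | zero => simp
  | succ k ih =>
    rw [Finset.sum_range_succ, ih, Finset.sum_range_succ]
    push_cast
    ring

theorem pos_one (T : SYT Y) (h : 1 ≤ Y.card) : T.pos 1 = (0, 0) := by
  have h1 : (1 : ℕ) ∈ Set.Icc 1 Y.card := ⟨le_rfl, h⟩
  obtain ⟨hm, he⟩ := T.pos_spec h1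
  rcases hp : T.pos 1 with ⟨r, c⟩
  rw [hp] at hm he
  simp only at he
  have h00 : (r, 0) ∈ Y := Y.up_left_mem le_rfl (Nat.zero_le _) hm
  have h000 : (0, 0) ∈ Y := Y.up_left_mem (Nat.zero_le _) le_rfl h00
  have e1 : 1 ≤ T.entry 0 0 := (T.entry_mem h000).1
  have hr0 : r = 0 := by
    by_contra hr
    have hlt : T.entry 0 0 < T.entry r 0 := T.col_strict (Nat.pos_of_ne_zero hr) h00
    have hle : T.entry r 0 ≤ T.entry r c := by
      rcases Nat.eq_zero_or_pos c with hc | hc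
      · rw [hc]
      · exact le_of_lt (T.row_strict hc hm)
    omega
  have hc0 : c = 0 := by
    subst hr0
    by_contra hc
    have := T.row_strict (Nat.pos_of_ne_zero hc) hm
    omega
  rw [hr0, hc0]

theorem gamma_one (T : SYT Y) (h : 1 ≤ Y.card) : gamma T 1 = 0 := by
  rw [gamma, T.pos_one h]
  simp

theorem sum_gamma (T : SYT Y) :
    ∑ v ∈ Finset.range Y.card, gamma T (v + 1)
      = ∑ c ∈ Y.cells, ((c.2 : ℤ) - (c.1 : ℤ)) := by
  apply Finset.sum_nbij' (fun v => T.pos (v + 1)) (fun c => T.entry c.1 c.2 - 1)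
  · intro v hv
    rw [Finset.mem_range] at hv
    exact (YoungDiagram.mem_cells _).2 (T.pos_mem ⟨by omega, by omega⟩)
  · intro c hc
    rw [YoungDiagram.mem_cells] at hc
    have := T.entry_mem hc
    rw [Set.mem_Icc] at this
    rw [Finset.mem_range]
    omega
  · intro v hv
    rw [Finset.mem_range] at hv
    have := T.entry_pos (v := v + 1) ⟨by omega, by omega⟩
    omega
  · intro c hc
    rw [YoungDiagram.mem_cells] at hc
    have h1 := T.entry_mem hc
    rw [Set.mem_Icc] at h1
    have h2 : T.entry c.1 c.2 - 1 + 1 = T.entry c.1 c.2 := by omega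
    rw [h2]
    exact (T.eq_pos hc rfl).symm
  · intro v _
    rfl

theorem not_descent_zero (T : SYT Y) : ¬T.IsDescent 0 := by
  rintro ⟨c, hc, c', hc', he, he', hlt⟩
  rw [YoungDiagram.mem_cells] at hc
  have := (T.entry_mem hc).1
  omega

theorem maj_cast (T : SYT Y) :
    (T.maj : ℤ) = ∑ i ∈ Finset.range Y.card, (i : ℤ) * (if T.IsDescent i then 1 else 0) := by
  rw [maj, descents, Finset.sum_filter]
  push_cast
  apply Finset.sum_congr rfl
  intro i _
  split_ifs <;> ring

/-- The master identity:
`4 ∑_T maj(T) = f^λ ( n(n-1) - 2 ∑_{cells} content )`. -/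
theorem master (h2 : 2 ≤ Y.card) :
    4 * ∑ T : SYT Y, (T.maj : ℤ)
      = (Fintype.card (SYT Y) : ℤ)
        * ((Y.card : ℤ) * ((Y.card : ℤ) - 1)
            - 2 * ∑ c ∈ Y.cells, ((c.2 : ℤ) - (c.1 : ℤ))) := by
  have hE : ∀ j, 1 ≤ j → j + 1 ≤ Y.card →
      ∑ T : SYT Y, eps T j = ∑ T : SYT Y, eps T 1 := by
    intro j
    induction j with
    | zero => omega
    | succ k ih =>
      intro h1 hk
      rcases Nat.eq_zero_or_pos k with hk0 | hk0
      · rw [hk0]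
      · rw [← sum_eps_eq hk0 (by omega)]
        exact ih hk0 (by omega)
  have hdlt : ∀ j, 1 ≤ j → j + 1 ≤ Y.card →
      ∑ T : SYT Y, dlt T j = ∑ T : SYT Y, eps T 1 := fun j a b =>
    (sum_dlt_eq_sum_eps a b).trans (hE j a b)
  -- telescoping
  have tel : ∀ T : SYT Y,
      ∑ i ∈ Finset.range (Y.card - 1), dlt T (i + 1) = gamma T Y.card := by
    intro T
    have h0 := Finset.sum_range_sub (f := fun i => gamma T (i + 1)) (n := Y.card - 1)
    have hnn : Y.card - 1 + 1 = Y.card := by omega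
    rw [hnn] at h0
    rw [T.gamma_one (by omega), sub_zero] at h0
    rw [← h0]
    apply Finset.sum_congr rfl
    intro i _
    rfl
  have hG : ∑ T : SYT Y, gamma T Y.card
      = ((Y.card : ℤ) - 1) * ∑ T : SYT Y, eps T 1 := by
    rw [← Finset.sum_congr rfl (fun T _ => tel T), Finset.sum_comm]
    have : ∀ i ∈ Finset.range (Y.card - 1),
        ∑ T : SYT Y, dlt T (i + 1) = ∑ T : SYT Y, eps T 1 := by
      intro i hi
      rw [Finset.mem_range] at hi
      exact hdlt (i + 1) (by omega) (by omega)
    rw [Finset.sum_congr rfl this, Finset.sum_const, Finset.card_range, nsmul_eq_mul]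
    congr 1
    push_cast [Nat.cast_sub (by omega : 1 ≤ Y.card)]
    ring
  -- Abel summation per tableau
  have abelT : ∀ T : SYT Y,
      ∑ i ∈ Finset.range (Y.card - 1), ((i : ℤ) + 1) * dlt T (i + 1)
        = (Y.card : ℤ) * gamma T Y.card - ∑ c ∈ Y.cells, ((c.2 : ℤ) - (c.1 : ℤ)) := by
    intro T
    have h0 := abel_sum (fun i => gamma T (i + 1)) (Y.card - 1)
    have hnn : Y.card - 1 + 1 = Y.card := by omega
    rw [hnn] at h0
    have hsplit : ∑ i ∈ Finset.range Y.card, gamma T (i + 1)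
        = ∑ i ∈ Finset.range (Y.card - 1), gamma T (i + 1) + gamma T Y.card := by
      rw [show Y.card = Y.card - 1 + 1 from (by omega), Finset.sum_range_succ]
      rw [show Y.card - 1 + 1 = Y.card from (by omega)]
    have hC := T.sum_gamma
    calc ∑ i ∈ Finset.range (Y.card - 1), ((i : ℤ) + 1) * dlt T (i + 1)
        = ∑ i ∈ Finset.range (Y.card - 1), ((i : ℤ) + 1)
            * (gamma T (i + 1 + 1) - gamma T (i + 1)) := rfl
      _ = ((Y.card - 1 : ℕ) : ℤ) * gamma T Y.card
            - ∑ i ∈ Finset.range (Y.card - 1), gamma T (i + 1) := h0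
      _ = (Y.card : ℤ) * gamma T Y.card - ∑ c ∈ Y.cells, ((c.2 : ℤ) - (c.1 : ℤ)) := by
          rw [← hC, hsplit]
          push_cast [Nat.cast_sub (by omega : 1 ≤ Y.card)]
          ring
  -- sum the Abel identity over all tableaux
  have hEC : 2 * (Fintype.card (SYT Y) : ℤ) * (∑ c ∈ Y.cells, ((c.2 : ℤ) - (c.1 : ℤ)))
      = (Y.card : ℤ) * ((Y.card : ℤ) - 1) * ∑ T : SYT Y, eps T 1 := by
    have hsum : ∑ T : SYT Y, ∑ i ∈ Finset.range (Y.card - 1), ((i : ℤ) + 1) * dlt T (i + 1)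
        = ∑ T : SYT Y, ((Y.card : ℤ) * gamma T Y.card
            - ∑ c ∈ Y.cells, ((c.2 : ℤ) - (c.1 : ℤ))) :=
      Finset.sum_congr rfl (fun T _ => abelT T)
    rw [Finset.sum_comm] at hsum
    have hL : ∀ i ∈ Finset.range (Y.card - 1),
        ∑ T : SYT Y, ((i : ℤ) + 1) * dlt T (i + 1)
          = ((i : ℤ) + 1) * ∑ T : SYT Y, eps T 1 := by
      intro i hi
      rw [Finset.mem_range] at hi
      rw [← Finset.mul_sum, hdlt (i + 1) (by omega) (by omega)]
    rw [Finset.sum_congr rfl hL, ← Finset.sum_mul] at hsum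
    rw [Finset.sum_sub_distrib, ← Finset.mul_sum, hG, Finset.sum_const, Finset.card_univ,
      nsmul_eq_mul] at hsum
    have hg := gauss_sum' (Y.card - 1)
    have hcast : ((Y.card - 1 : ℕ) : ℤ) = (Y.card : ℤ) - 1 := by
      push_cast [Nat.cast_sub (by omega : 1 ≤ Y.card)]
      ring
    rw [hcast] at hg
    linear_combination 2 * hsum - (∑ T : SYT Y, eps T 1) * hg
  -- descent counting
  have hdesc : ∀ i, 1 ≤ i → i + 1 ≤ Y.card →
      2 * ∑ T : SYT Y, (if T.IsDescent i then (1 : ℤ) else 0)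
        = (Fintype.card (SYT Y) : ℤ) - ∑ T : SYT Y, eps T 1 := by
    intro i h1 hi
    rw [sum_desc_eq h1 hi, Finset.sum_sub_distrib, Finset.sum_const, Finset.card_univ,
      nsmul_eq_mul, mul_one, hE i h1 hi]
  -- put it together
  have hmaj : 2 * ∑ T : SYT Y, (T.maj : ℤ)
      = (∑ i ∈ Finset.range Y.card, (i : ℤ))
        * ((Fintype.card (SYT Y) : ℤ) - ∑ T : SYT Y, eps T 1) := by
    have h0 : ∑ T : SYT Y, (T.maj : ℤ)
        = ∑ i ∈ Finset.range Y.card, ∑ T : SYT Y,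
            (i : ℤ) * (if T.IsDescent i then 1 else 0) := by
      rw [← Finset.sum_comm]
      exact Finset.sum_congr rfl (fun T _ => T.maj_cast)
    rw [h0, Finset.mul_sum, Finset.sum_mul]
    apply Finset.sum_congr rfl
    intro i hi
    rw [Finset.mem_range] at hi
    rcases Nat.eq_zero_or_pos i with h | h
    · subst h
      simp
    · rw [← Finset.mul_sum]
      have := hdesc i h (by omega)
      nlinarith [this]
  have hg2 := gauss_sum Y.card
  linear_combination 2 * hmaj
    + ((Fintype.card (SYT Y) : ℤ) - ∑ T : SYT Y, eps T 1) * hg2 + hEC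

end Assembly

section ContentBound

open scoped Classical

variable {Y : YoungDiagram}

theorem row_lt_colLen {i j : ℕ} (h : (i, j) ∈ Y) : i < Y.colLen 0 := by
  rw [← YoungDiagram.mem_iff_lt_colLen]
  exact Y.up_left_mem le_rfl (Nat.zero_le _) h

theorem colLen_le_card : Y.colLen 0 ≤ Y.card := by
  rw [YoungDiagram.colLen_eq_card]
  apply Finset.card_le_card
  intro c hc
  rw [YoungDiagram.mem_col_iff] at hc
  exact (YoungDiagram.mem_cells _).2 hc.1

theorem sum_cells_eq {M : Type*} [AddCommMonoid M] (g : ℕ × ℕ → M) {K : ℕ}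
    (hK : Y.colLen 0 ≤ K) :
    ∑ c ∈ Y.cells, g c = ∑ i ∈ Finset.range K, ∑ j ∈ Finset.range (Y.rowLen i), g (i, j) := by
  have hcells : Y.cells = (Finset.range K).biUnion (fun i => Y.row i) := by
    ext c
    simp only [Finset.mem_biUnion, Finset.mem_range, YoungDiagram.mem_row_iff,
      YoungDiagram.mem_cells]
    constructor
    · intro hc
      refine ⟨c.1, lt_of_lt_of_le (row_lt_colLen (by rwa [Prod.mk.eta] : (c.1, c.2) ∈ Y)) hK,
        hc, rfl⟩
    · rintro ⟨i, _, hc, _⟩; exact hc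
  have hdisj : ∀ x ∈ Finset.range K, ∀ y ∈ Finset.range K, x ≠ y →
      Disjoint (Y.row x) (Y.row y) := by
    intro x _ y _ hxy
    simp only [Finset.disjoint_left]
    intro c hcx hcy
    rw [YoungDiagram.mem_row_iff] at hcx hcy
    exact hxy (hcx.2 ▸ hcy.2)
  rw [hcells, Finset.sum_biUnion hdisj]
  apply Finset.sum_congr rfl
  intro i _
  rw [YoungDiagram.row_eq_prod, Finset.sum_product, Finset.sum_singleton]

theorem card_eq_sum_rowLen {K : ℕ} (hK : Y.colLen 0 ≤ K) :
    Y.card = ∑ i ∈ Finset.range K, Y.rowLen i := by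
  have h := sum_cells_eq (Y := Y) (fun _ => (1 : ℕ)) hK
  rw [show Y.card = ∑ _c ∈ Y.cells, 1 from Finset.card_eq_sum_ones _, h]
  apply Finset.sum_congr rfl
  intro i _
  rw [Finset.sum_const, Finset.card_range, smul_eq_mul, mul_one]

theorem sum_mul_sub_le {ι : Type*} (s : Finset ι) (x : ι → ℤ) (hx : ∀ i ∈ s, 0 ≤ x i) :
    ∑ i ∈ s, x i * (x i - 1) ≤ (∑ i ∈ s, x i) * ((∑ i ∈ s, x i) - 1) := by
  classical
  induction s using Finset.cons_induction with
  | empty => simp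
  | cons a s ha ih =>
    rw [Finset.sum_cons, Finset.sum_cons]
    have h1 : 0 ≤ x a := hx a (Finset.mem_cons_self a s)
    have h2 : 0 ≤ ∑ i ∈ s, x i :=
      Finset.sum_nonneg (fun i hi => hx i (Finset.mem_cons_of_mem hi))
    have h3 := ih (fun i hi => hx i (Finset.mem_cons_of_mem hi))
    nlinarith [mul_nonneg h1 h2]

theorem content_bound {n m : ℕ} (hm : 0 < m) (hnm : n ≤ 2 * m) (hmn : m < n)
    (hY : Y.card = n) (hrow : Y.rowLen 0 ≤ m) :
    2 * ∑ c ∈ Y.cells, ((c.2 : ℤ) - (c.1 : ℤ))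
      ≤ (m : ℤ) * ((m : ℤ) - 1) + ((n : ℤ) - (m : ℤ)) * ((n : ℤ) - (m : ℤ) - 1) := by
  have hK : Y.colLen 0 ≤ n := hY ▸ colLen_le_card
  have hcard : (n : ℤ) = ∑ i ∈ Finset.range n, (Y.rowLen i : ℤ) := by
    have := card_eq_sum_rowLen (Y := Y) hK
    rw [hY] at this
    exact_mod_cast this
  -- 2C ≤ ∑ L_i (L_i - 1)
  have step1 : 2 * ∑ c ∈ Y.cells, ((c.2 : ℤ) - (c.1 : ℤ))
      ≤ ∑ i ∈ Finset.range n, (Y.rowLen i : ℤ) * ((Y.rowLen i : ℤ) - 1) := by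
    rw [sum_cells_eq (fun c => ((c.2 : ℤ) - (c.1 : ℤ))) hK, Finset.mul_sum]
    apply Finset.sum_le_sum
    intro i _
    have hg := gauss_sum (Y.rowLen i)
    calc 2 * ∑ j ∈ Finset.range (Y.rowLen i), (((i, j).2 : ℤ) - ((i, j).1 : ℤ))
        ≤ 2 * ∑ j ∈ Finset.range (Y.rowLen i), (j : ℤ) := by
          have : ∑ j ∈ Finset.range (Y.rowLen i), (((i, j).2 : ℤ) - ((i, j).1 : ℤ))
              ≤ ∑ j ∈ Finset.range (Y.rowLen i), (j : ℤ) := by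
            apply Finset.sum_le_sum
            intro j _
            simp only
            have : (0 : ℤ) ≤ (i : ℤ) := Int.natCast_nonneg i
            omega
          omega
      _ = (Y.rowLen i : ℤ) * ((Y.rowLen i : ℤ) - 1) := hg
  -- bound ∑ L_i (L_i - 1)
  have hL0 : ∀ i, (Y.rowLen i : ℤ) ≤ (Y.rowLen 0 : ℤ) := by
    intro i
    exact_mod_cast Y.rowLen_anti 0 i (Nat.zero_le _)
  have hLnn : ∀ i, (0 : ℤ) ≤ (Y.rowLen i : ℤ) := fun i => Int.natCast_nonneg _
  have hsplit : ∑ i ∈ Finset.range n, (Y.rowLen i : ℤ) * ((Y.rowLen i : ℤ) - 1)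
      = (Y.rowLen 0 : ℤ) * ((Y.rowLen 0 : ℤ) - 1)
        + ∑ i ∈ Finset.range (n - 1), (Y.rowLen (i + 1) : ℤ) * ((Y.rowLen (i + 1) : ℤ) - 1) := by
    rw [show n = (n - 1) + 1 from (by omega), Finset.sum_range_succ']
    ring_nf
    rw [show 1 + (n - 1) - 1 = n - 1 from (by omega)]
    ring
  have hsplit2 : (n : ℤ) = (Y.rowLen 0 : ℤ) + ∑ i ∈ Finset.range (n - 1), (Y.rowLen (i + 1) : ℤ) := by
    rw [hcard, show n = (n - 1) + 1 from (by omega), Finset.sum_range_succ']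
    rw [show n - 1 + 1 - 1 = n - 1 from (by omega)]
    ring
  set B : ℤ := ∑ i ∈ Finset.range (n - 1), (Y.rowLen (i + 1) : ℤ) with hB
  have hBnn : 0 ≤ B := Finset.sum_nonneg (fun i _ => hLnn _)
  have htail : ∑ i ∈ Finset.range (n - 1), (Y.rowLen (i + 1) : ℤ) * ((Y.rowLen (i + 1) : ℤ) - 1)
      ≤ B * (B - 1) :=
    sum_mul_sub_le _ _ (fun i _ => hLnn _)
  set a : ℤ := (Y.rowLen 0 : ℤ) with ha
  have ham : a ≤ (m : ℤ) := by rw [ha]; exact_mod_cast hrow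
  have hann : 0 ≤ a := Int.natCast_nonneg _
  have hsm : (n : ℤ) - (m : ℤ) ≤ (m : ℤ) := by
    have : (n : ℤ) ≤ 2 * m := by exact_mod_cast hnm
    omega
  have hs1 : 1 ≤ (n : ℤ) - (m : ℤ) := by
    have : (m : ℤ) < n := by exact_mod_cast hmn
    omega
  have hm1 : 1 ≤ (m : ℤ) := by exact_mod_cast hm
  rcases le_or_gt ((n : ℤ) - (m : ℤ)) a with hcase | hcase
  · -- a ≥ n - m : convexity
    have : ∑ i ∈ Finset.range n, (Y.rowLen i : ℤ) * ((Y.rowLen i : ℤ) - 1)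
        ≤ a * (a - 1) + ((n : ℤ) - a) * ((n : ℤ) - a - 1) := by
      rw [hsplit]
      have hBa : B = (n : ℤ) - a := by omega
      rw [← hBa]
      omega
    nlinarith [this, step1, mul_nonneg (sub_nonneg.2 ham) (sub_nonneg.2 hcase)]
  · -- a < n - m : linear bound
    have hterm : ∀ i ∈ Finset.range n,
        (Y.rowLen i : ℤ) * ((Y.rowLen i : ℤ) - 1) ≤ (Y.rowLen i : ℤ) * (a - 1) := by
      intro i _
      apply mul_le_mul_of_nonneg_left _ (hLnn i)
      have := hL0 i
      omega
    have : ∑ i ∈ Finset.range n, (Y.rowLen i : ℤ) * ((Y.rowLen i : ℤ) - 1)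
        ≤ (n : ℤ) * (a - 1) := by
      calc ∑ i ∈ Finset.range n, (Y.rowLen i : ℤ) * ((Y.rowLen i : ℤ) - 1)
          ≤ ∑ i ∈ Finset.range n, (Y.rowLen i : ℤ) * (a - 1) := Finset.sum_le_sum hterm
        _ = (n : ℤ) * (a - 1) := by rw [← Finset.sum_mul, ← hcard]
    have key : (n : ℤ) * (a - 1) ≤ (m : ℤ) * ((m : ℤ) - 1)
        + ((n : ℤ) - (m : ℤ)) * ((n : ℤ) - (m : ℤ) - 1) := by
      have hn0 : (0 : ℤ) ≤ (n : ℤ) := Int.natCast_nonneg _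
      have hm0 : (0 : ℤ) ≤ (m : ℤ) := Int.natCast_nonneg _
      nlinarith [mul_nonneg hn0 (show (0 : ℤ) ≤ (n : ℤ) - (m : ℤ) - 1 - a by omega),
        mul_nonneg hm0 (show (0 : ℤ) ≤ (m : ℤ) - ((n : ℤ) - (m : ℤ)) by omega)]
    omega
  -- (unreachable)

end ContentBound
end SYT
/-- Let `n` and `m` be positive integers with `n/2 ≤ m < n`, and let
`λ` be a partition of `n` with `λ₁ ≤ m`.  Then the expected major index of a uniformly
random standard Young tableau of shape `λ` satisfies
`E_λ[maj] ≥ (1/2)·[C(n,2) − C(m,2) − C(n−m,2)]`. -/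
theorem expected_maj_lower_bound (n m : ℕ) (hn : 0 < n) (hm : 0 < m)
    (hnm : n ≤ 2 * m) (hmn : m < n)
    (Y : YoungDiagram) (hY : Y.card = n) (hrow : Y.rowLen 0 ≤ m) :
    (1 / 2) * ((n.choose 2 : ℝ) - (m.choose 2 : ℝ) - ((n - m).choose 2 : ℝ)) ≤
      sytExpect Y (fun T => (T.maj : ℝ)) := by
  classical
  have hn2 : 2 ≤ n := by omega
  have hmaster := SYT.master (Y := Y) (by rw [hY]; omega)
  rw [hY] at hmaster
  have hbound := SYT.content_bound (Y := Y) hm hnm hmn hY hrow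
  have hf : 0 < Fintype.card (SYT Y) := @Fintype.card_pos _ _ SYT.nonempty
  rw [sytExpect, finsum_eq_sum_of_fintype, Nat.card_eq_fintype_card]
  rw [le_div_iff₀ (by exact_mod_cast hf)]
  have hcastS : ∑ T : SYT Y, ((T.maj : ℝ)) = ((∑ T : SYT Y, (T.maj : ℤ) : ℤ) : ℝ) := by
    push_cast
    rfl
  rw [hcastS]
  have hmR : (4 : ℝ) * ((∑ T : SYT Y, (T.maj : ℤ) : ℤ) : ℝ)
      = (Fintype.card (SYT Y) : ℝ)
        * ((n : ℝ) * ((n : ℝ) - 1)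
          - 2 * ((∑ c ∈ Y.cells, ((c.2 : ℤ) - (c.1 : ℤ)) : ℤ) : ℝ)) := by
    exact_mod_cast congrArg (Int.cast : ℤ → ℝ) hmaster
  have hbR : 2 * ((∑ c ∈ Y.cells, ((c.2 : ℤ) - (c.1 : ℤ)) : ℤ) : ℝ)
      ≤ (m : ℝ) * ((m : ℝ) - 1) + ((n : ℝ) - (m : ℝ)) * ((n : ℝ) - (m : ℝ) - 1) := by
    exact_mod_cast hbound
  rw [Nat.cast_choose_two, Nat.cast_choose_two, Nat.cast_choose_two]
  have hnm' : ((n - m : ℕ) : ℝ) = (n : ℝ) - (m : ℝ) := by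
    push_cast [Nat.cast_sub hmn.le]
    ring
  rw [hnm']
  have hfR : (0 : ℝ) ≤ (Fintype.card (SYT Y) : ℝ) := by positivity
  linarith [hmR, mul_le_mul_of_nonneg_left hbR hfR]
end
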